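/- arXiv:1308.3074 — 9 statements merged into one kernel-verified Lean document; each statement's English description precedes it below -/
import Mathlib

section
/- For every n ≥ 4, the graph Q_n is indecomposable, where Q_n has vertex set {1,…,n} and edge set E(P_{n−2}) ∪ { {n−1, i} : i ∈ {1,…,n} \ {n−1, n−2} }. -/
open SimpleGraph

variable {V : Type*}

/-- `I` is an interval (module) of `G`: every vertex outside `I` is adjacent
either to all or to none of the vertices of `I`. -/
def IsInterval (G : SimpleGraph V) (I : Set V) : Prop :=
  ∀ x ∉ I, ∀ a ∈ I, ∀ b ∈ I, (G.Adj a x ↔ G.Adj b x)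

/-- A graph is indecomposable if its only intervals are trivial. -/
def Indecomposable (G : SimpleGraph V) : Prop :=
  ∀ I : Set V, IsInterval G I → I = ∅ ∨ I = Set.univ ∨ ∃ x, I = {x}

def Decomposable (G : SimpleGraph V) : Prop := ¬ Indecomposable G

/-- The path graph on `Fin n`; the vertex `(i : Fin n)` represents the
paper's vertex `i+1`, so edges join consecutive indices. -/
def P (n : ℕ) : SimpleGraph (Fin n) :=
  SimpleGraph.fromRel (fun i j => (i : ℕ) + 1 = (j : ℕ))

/-- The graph `Q_n` on `Fin n` (index `i` represents the paper's vertex `i+1`):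
the path on indices `0..n-3` together with the hub index `n-2` (vertex `n-1`)
joined to every index except `n-2` and `n-3`. -/
def Q (n : ℕ) : SimpleGraph (Fin n) :=
  SimpleGraph.fromRel (fun i j =>
    ((i : ℕ) + 1 = (j : ℕ) ∧ (j : ℕ) ≤ n - 3) ∨
    ((i : ℕ) = n - 2 ∧ (j : ℕ) ≠ n - 2 ∧ (j : ℕ) ≠ n - 3))

/-- `Ext(X)`. -/
def ExtSet (G : SimpleGraph V) (X : Set V) : Set V :=
  {v | v ∉ X ∧ Indecomposable (G.induce (X ∪ {v}))}

/-- `⟨X⟩`. -/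
def AngleSet (G : SimpleGraph V) (X : Set V) : Set V :=
  {v | v ∉ X ∧ ((∀ x ∈ X, G.Adj v x) ∨ (∀ x ∈ X, ¬ G.Adj v x))}

/-- `X(u)`: vertices `v ∉ X` such that `{u,v}` is an interval of `G[X ∪ {v}]`. -/
def XSet (G : SimpleGraph V) (X : Set V) (u : V) : Set V :=
  {v | v ∉ X ∧ IsInterval (G.induce (X ∪ {v})) (Subtype.val ⁻¹' {u, v})}

/-- `G` is `{a,b}`-minimal. -/
def IsMinimal (G : SimpleGraph V) (a b : V) : Prop :=
  Indecomposable G ∧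
    ∀ X : Set V, X ⊂ Set.univ → a ∈ X → b ∈ X → 3 ≤ X.ncard →
      Decomposable (G.induce X)

def QA (n a b : ℕ) : Prop :=
  a ≠ b ∧ ((a + 1 = b ∧ b ≤ n - 3) ∨ (b + 1 = a ∧ a ≤ n - 3) ∨
    (a = n - 2 ∧ b ≠ n - 2 ∧ b ≠ n - 3) ∨ (b = n - 2 ∧ a ≠ n - 2 ∧ a ≠ n - 3))

lemma adjQ {n : ℕ} (a b : Fin n) : (Q n).Adj a b ↔ QA n a b := by
  simp only [Q, SimpleGraph.fromRel_adj, QA, ne_eq, Fin.ext_iff]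
  tauto

theorem Q_indecomposable (n : ℕ) (hn : 4 ≤ n) :
    Indecomposable (Q n) := by
  intro I hI
  by_cases hne : I = ∅
  · exact Or.inl hne
  right
  obtain ⟨a, ha⟩ := Set.nonempty_iff_ne_empty.mpr hne
  by_cases hsing : ∀ b ∈ I, b = a
  · exact Or.inr ⟨a, Set.eq_singleton_iff_unique_mem.mpr ⟨ha, hsing⟩⟩
  push_neg at hsing
  obtain ⟨b, hb, hba⟩ := hsing
  left
  -- membership predicate on ℕ
  set mem : ℕ → Prop := fun k => ∀ hk : k < n, (⟨k, hk⟩ : Fin n) ∈ I with hmem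
  have pull : ∀ u v x : ℕ, u < n → v < n → x < n → mem u → mem v →
      QA n u x → ¬ QA n v x → mem x := by
    intro u v x hu hv hx hmu hmv h1 h2 hx'
    by_contra hxI
    exact h2 ((adjQ _ _).mp
      ((hI ⟨x, hx⟩ hxI ⟨u, hu⟩ (hmu hu) ⟨v, hv⟩ (hmv hv)).mp ((adjQ _ _).mpr h1)))
  have hma : mem (a : ℕ) := fun hk => by
    have : (⟨(a : ℕ), hk⟩ : Fin n) = a := by ext; rfl
    rwa [this]
  have hmb : mem (b : ℕ) := fun hk => by
    have : (⟨(b : ℕ), hk⟩ : Fin n) = b := by ext; rfl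
    rwa [this]
  have hab : (a : ℕ) ≠ (b : ℕ) := fun h => hba (by ext; omega)
  have han : (a : ℕ) < n := a.isLt
  have hbn : (b : ℕ) < n := b.isLt
  clear hba ha hb hne
  -- Step A: generic: from two distinct path vertices i < j ≤ n-3, climb to n-3
  have climb : ∀ d i j, i < j → j + d = n - 3 → mem i → mem j → mem (n - 3) := by
    intro d
    induction d with
    | zero => intro i j _ hj _ hmj; exact (by omega : j = n - 3) ▸ hmj
    | succ d ih =>
      intro i j hij hj hmi hmj
      have hj1 : mem (j + 1) := by
        refine pull j i (j + 1) (by omega) (by omega) (by omega) hmj hmi ?_ ?_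
        · exact ⟨by omega, Or.inl ⟨rfl, by omega⟩⟩
        · rintro ⟨h1, h2⟩; omega
      exact ih i (j + 1) (by omega) (by omega) hmi hj1
  have memCongr : ∀ {x y : ℕ}, x = y → mem x → mem y := fun h hx => h ▸ hx
  -- hub and tail from (i, n-3) with i < n-3
  have hubT : ∀ i, i < n - 3 → mem i → mem (n - 3) → mem (n - 2) := by
    intro i hi hmi hm3
    refine pull i (n - 3) (n - 2) (by omega) (by omega) (by omega) hmi hm3 ?_ ?_
    · exact ⟨by omega, Or.inr (Or.inr (Or.inr ⟨rfl, by omega, by omega⟩))⟩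
    · rintro ⟨h1, h2⟩; omega
  have tailT : ∀ i, i ≤ n - 3 → mem i → mem (n - 2) → mem (n - 1) := by
    intro i hi hmi hmh
    refine pull (n - 2) i (n - 1) (by omega) (by omega) (by omega) hmh hmi ?_ ?_
    · exact ⟨by omega, Or.inr (Or.inr (Or.inl ⟨rfl, by omega, by omega⟩))⟩
    · rintro ⟨h1, h2⟩; omega
  -- Step A: from any two distinct vertices, get a path vertex and the tail
  have main2 : ∀ i j, i < j → j < n → mem i → mem j →
      ∃ p, p ≤ n - 3 ∧ mem p ∧ mem (n - 1) := by
    intro i j hij hjn hmi hmj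
    rcases (by omega : j ≤ n - 3 ∨ j = n - 2 ∨ j = n - 1) with hj | hj | hj
    · -- both on the path
      have hm3 : mem (n - 3) := climb (n - 3 - j) i j hij (by omega) hmi hmj
      have hmh : mem (n - 2) := hubT i (by omega) hmi hm3
      exact ⟨i, by omega, hmi, tailT i (by omega) hmi hmh⟩
    · -- j is the hub
      exact ⟨i, by omega, hmi, tailT i (by omega) hmi (memCongr hj hmj)⟩
    · -- j is the tail
      rcases (by omega : i ≤ n - 3 ∨ i = n - 2) with hi | hi
      · exact ⟨i, hi, hmi, memCongr hj hmj⟩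
      · -- {hub, tail}: pull index 0
        have hm0 : mem 0 := by
          refine pull (n - 2) (n - 1) 0 (by omega) (by omega) (by omega)
            (memCongr hi hmi) (memCongr hj hmj) ?_ ?_
          · exact ⟨by omega, Or.inr (Or.inr (Or.inl ⟨rfl, by omega, by omega⟩))⟩
          · rintro ⟨h1, h2⟩; omega
        exact ⟨0, by omega, hm0, memCongr hj hmj⟩
  have key : ∃ p, p ≤ n - 3 ∧ mem p ∧ mem (n - 1) := by
    rcases lt_or_gt_of_ne hab with h | h
    · exact main2 _ _ h hbn hma hmb
    · exact main2 _ _ h han hmb hma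
  obtain ⟨p, hp, hmp, hmt⟩ := key
  -- Step B: adjacent pair on the path
  have pairEx : ∃ q, q + 1 ≤ n - 3 ∧ mem q ∧ mem (q + 1) := by
    rcases Nat.eq_zero_or_pos p with h0 | h0
    · have hm1 : mem 1 := by
        refine pull p (n - 1) 1 (by omega) (by omega) (by omega) hmp hmt ?_ ?_
        · exact ⟨by omega, Or.inl ⟨by omega, by omega⟩⟩
        · rintro ⟨h1, h2⟩; omega
      exact ⟨0, by omega, memCongr h0 hmp, hm1⟩
    · have hm1 : mem (p - 1) := by
        refine pull p (n - 1) (p - 1) (by omega) (by omega) (by omega) hmp hmt ?_ ?_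
        · exact ⟨by omega, Or.inr (Or.inl ⟨by omega, by omega⟩)⟩
        · rintro ⟨h1, h2⟩; omega
      exact ⟨p - 1, by omega, hm1, memCongr (by omega) hmp⟩
  obtain ⟨q, hq, hq0, hq1⟩ := pairEx
  -- Step C: all path vertices
  have down : ∀ d k, k + d = q → mem k ∧ mem (k + 1) := by
    intro d
    induction d with
    | zero =>
      intro k hk
      exact ⟨memCongr (by omega) hq0, memCongr (by omega) hq1⟩
    | succ d ih =>
      intro k hk
      have H := ih (k + 1) (by omega)
      have hk0 : mem k := by
        refine pull (k + 1) (k + 2) k (by omega) (by omega) (by omega)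
          H.1 (memCongr (by omega) H.2) ?_ ?_
        · exact ⟨by omega, Or.inr (Or.inl ⟨by omega, by omega⟩)⟩
        · rintro ⟨h1, h2⟩; omega
      exact ⟨hk0, H.1⟩
  have upL : ∀ d, q + 1 + d ≤ n - 3 → mem (q + d) ∧ mem (q + 1 + d) := by
    intro d
    induction d with
    | zero =>
      intro _
      exact ⟨memCongr (by omega) hq0, memCongr (by omega) hq1⟩
    | succ d ih =>
      intro hd
      have H := ih (by omega)
      have hx : mem (q + 1 + (d + 1)) := by
        refine pull (q + 1 + d) (q + d) (q + 1 + (d + 1)) (by omega) (by omega)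
          (by omega) H.2 H.1 ?_ ?_
        · exact ⟨by omega, Or.inl ⟨by omega, by omega⟩⟩
        · rintro ⟨h1, h2⟩; omega
      exact ⟨memCongr (by omega) H.2, hx⟩
  have path : ∀ k, k ≤ n - 3 → mem k := by
    intro k hk
    rcases le_or_gt k q with h | h
    · exact (down (q - k) k (by omega)).1
    · rcases (by omega : k + 1 ≤ n - 3 ∨ k = n - 3) with h2 | h2
      · exact memCongr (by omega) (upL (k - q) (by omega)).1
      · exact memCongr (by omega) (upL (n - 4 - q) (by omega)).2
  -- Step D: hub and tail
  have hmh : mem (n - 2) := hubT 0 (by omega) (path 0 (by omega)) (path (n - 3) le_rfl)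
  -- Step E: conclude
  apply Set.eq_univ_iff_forall.mpr
  intro v
  have hv : (v : ℕ) < n := v.isLt
  have hveq : ∀ h : (v : ℕ) < n, (⟨(v : ℕ), h⟩ : Fin n) = v := fun h => by ext; rfl
  rcases (by omega : (v : ℕ) ≤ n - 3 ∨ (v : ℕ) = n - 2 ∨ (v : ℕ) = n - 1) with h | h | h
  · exact hveq hv ▸ path _ h hv
  · exact hveq hv ▸ memCongr h.symm hmh hv
  · exact hveq hv ▸ memCongr h.symm hmt hv
end

section
/- For every n ≥ 4, the path P_n is {1,n}-minimal: it is indecomposable, and for every proper subset X of {1,…,n} with {1,n} ⊆ X and |X| ≥ 3, the induced subgraph P_n[X] is decomposable. -/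
open SimpleGraph

variable {V : Type*}

lemma P_adj {n : ℕ} {a b : Fin n} :
    (P n).Adj a b ↔ ((a:ℕ)+1 = (b:ℕ) ∨ (b:ℕ)+1 = (a:ℕ)) := by
  simp only [P, SimpleGraph.fromRel_adj]
  constructor
  · rintro ⟨_, h⟩; exact h
  · intro h
    refine ⟨fun e => ?_, h⟩
    subst e; omega

lemma mem_of_val_eq {n : ℕ} {I : Set (Fin n)} {a b : Fin n}
    (h : (a:ℕ) = (b:ℕ)) (ha : a ∈ I) : b ∈ I := by
  rwa [Fin.ext h] at ha

lemma step_up {n : ℕ} {I : Set (Fin n)} (hI : IsInterval (P n) I)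
    {e : ℕ} (he : e + 2 < n)
    (h1 : (⟨e, by omega⟩ : Fin n) ∈ I) (h2 : (⟨e+1, by omega⟩ : Fin n) ∈ I) :
    (⟨e+2, by omega⟩ : Fin n) ∈ I := by
  by_contra hx
  have hadj : (P n).Adj ⟨e+1, by omega⟩ ⟨e+2, by omega⟩ :=
    P_adj.mpr (Or.inl (by simp only [Fin.val_mk]))
  have hd := P_adj.mp ((hI _ hx _ h2 _ h1).mp hadj)
  simp only [Fin.val_mk] at hd
  omega

lemma step_down {n : ℕ} {I : Set (Fin n)} (hI : IsInterval (P n) I)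
    {e : ℕ} (he : 0 < e) (he2 : e + 1 < n)
    (h1 : (⟨e, by omega⟩ : Fin n) ∈ I) (h2 : (⟨e+1, by omega⟩ : Fin n) ∈ I) :
    (⟨e-1, by omega⟩ : Fin n) ∈ I := by
  by_contra hx
  have hadj : (P n).Adj ⟨e, by omega⟩ ⟨e-1, by omega⟩ :=
    P_adj.mpr (Or.inr (by simp only [Fin.val_mk] <;> omega))
  have hd := P_adj.mp ((hI _ hx _ h1 _ h2).mp hadj)
  simp only [Fin.val_mk] at hd
  omega

lemma pair_univ {n : ℕ} {I : Set (Fin n)} (hI : IsInterval (P n) I)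
    {c : ℕ} (hc : c + 1 < n)
    (h1 : (⟨c, by omega⟩ : Fin n) ∈ I) (h2 : (⟨c+1, by omega⟩ : Fin n) ∈ I) :
    I = Set.univ := by
  have up : ∀ m, ∀ hm : c + m < n, (⟨c + m, hm⟩ : Fin n) ∈ I := by
    intro m
    induction m using Nat.strong_induction_on with
    | _ m ih =>
      match m with
      | 0 =>
        intro hm
        exact mem_of_val_eq (by simp only [Fin.val_mk] <;> omega) h1
      | 1 =>
        intro hm
        exact mem_of_val_eq (by simp only [Fin.val_mk] <;> omega) h2
      | (k+2) =>
        intro hm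
        have hA := ih k (by omega) (by omega)
        have hB := ih (k+1) (by omega) (by omega)
        exact mem_of_val_eq (by simp only [Fin.val_mk] <;> omega)
          (step_up hI (e := c + k) (by omega)
            (mem_of_val_eq (by simp only [Fin.val_mk] <;> omega) hA)
            (mem_of_val_eq (by simp only [Fin.val_mk] <;> omega) hB))
  have down : ∀ m, m ≤ c →
      (⟨c - m, by omega⟩ : Fin n) ∈ I ∧ (⟨c - m + 1, by omega⟩ : Fin n) ∈ I := by
    intro m
    induction m with
    | zero =>
      intro _
      exact ⟨mem_of_val_eq (by simp only [Fin.val_mk] <;> omega) h1,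
        mem_of_val_eq (by simp only [Fin.val_mk] <;> omega) h2⟩
    | succ k ih =>
      intro hm
      obtain ⟨hk1, hk2⟩ := ih (by omega)
      refine ⟨?_, mem_of_val_eq (by simp only [Fin.val_mk] <;> omega) hk1⟩
      exact mem_of_val_eq (by simp only [Fin.val_mk] <;> omega)
        (step_down hI (e := c - k) (by omega) (by omega)
          hk1 (mem_of_val_eq (by simp only [Fin.val_mk] <;> omega) hk2))
  ext v
  simp only [Set.mem_univ, iff_true]
  rcases le_or_gt (v : ℕ) c with h | h
  · exact mem_of_val_eq (by simp only [Fin.val_mk] <;> omega)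
      (down (c - v.val) (by omega)).1
  · have hvn : (v:ℕ) < n := v.isLt
    exact mem_of_val_eq (by simp only [Fin.val_mk] <;> omega)
      (up (v.val - c) (by omega))

theorem path_indec (n : ℕ) (hn : 4 ≤ n) : Indecomposable (P n) := by
  intro I hI
  by_cases h0 : I = ∅
  · exact Or.inl h0
  right
  obtain ⟨a, ha⟩ := Set.nonempty_iff_ne_empty.mpr h0
  by_cases h1 : I = {a}
  · exact Or.inr ⟨a, h1⟩
  left
  have hb : ∃ b ∈ I, b ≠ a := by
    by_contra h; push_neg at h
    exact h1 (Set.eq_singleton_iff_unique_mem.mpr ⟨ha, h⟩)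
  obtain ⟨b, hb, hba⟩ := hb
  have key : ∀ a b : Fin n, a ∈ I → b ∈ I → (a:ℕ) < (b:ℕ) → I = Set.univ := by
    clear hba hb ha h1 b a
    intro a b ha hb hab
    by_cases hb1 : (b:ℕ) = (a:ℕ) + 1
    · exact pair_univ hI (c := (a:ℕ)) (by omega)
        (mem_of_val_eq (by simp only [Fin.val_mk] <;> omega) ha)
        (mem_of_val_eq (by simp only [Fin.val_mk] <;> omega) hb)
    · have hlt : (a:ℕ) + 1 < (b:ℕ) := by omega
      by_cases hin : (⟨(a:ℕ)+1, by omega⟩ : Fin n) ∈ I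
      · exact pair_univ hI (c := (a:ℕ)) (by omega)
          (mem_of_val_eq (by simp only [Fin.val_mk] <;> omega) ha) hin
      · have hiff := hI _ hin _ ha _ hb
        have hadj : (P n).Adj a ⟨(a:ℕ)+1, by omega⟩ :=
          P_adj.mpr (Or.inl (by simp only [Fin.val_mk]))
        have hd := P_adj.mp (hiff.mp hadj)
        simp only [Fin.val_mk] at hd
        have hb2 : (b:ℕ) = (a:ℕ) + 2 := by omega
        by_cases haz : (a:ℕ) = 0
        · have h3n : (3:ℕ) < n := by omega
          by_cases h3 : (⟨3, by omega⟩ : Fin n) ∈ I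
          · exact pair_univ hI (c := 2) (by omega)
              (mem_of_val_eq (by simp only [Fin.val_mk] <;> omega) hb) h3
          · have hiff3 := hI _ h3 _ ha _ hb
            have hadj3 : (P n).Adj b ⟨3, by omega⟩ :=
              P_adj.mpr (Or.inl (by simp only [Fin.val_mk] <;> omega))
            have hd3 := P_adj.mp (hiff3.mpr hadj3)
            simp only [Fin.val_mk] at hd3
            omega
        · by_cases hm : (⟨(a:ℕ)-1, by omega⟩ : Fin n) ∈ I
          · exact pair_univ hI (c := (a:ℕ)-1) (by omega) hm
              (mem_of_val_eq (by simp only [Fin.val_mk] <;> omega) ha)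
          · have hiffm := hI _ hm _ ha _ hb
            have hadjm : (P n).Adj a ⟨(a:ℕ)-1, by omega⟩ :=
              P_adj.mpr (Or.inr (by simp only [Fin.val_mk] <;> omega))
            have hdm := P_adj.mp (hiffm.mp hadjm)
            simp only [Fin.val_mk] at hdm
            omega
  rcases lt_or_gt_of_ne (fun e => hba (Fin.ext e) : (b:ℕ) ≠ (a:ℕ)) with h | h
  · exact key b a hb ha h
  · exact key a b ha hb h

theorem path_minimal (n : ℕ) (hn : 4 ≤ n) :
    IsMinimal (P n) (⟨0, by omega⟩ : Fin n) (⟨n - 1, by omega⟩ : Fin n) := by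
  constructor
  · exact path_indec n hn
  intro X hX h0 hn1 hcard hind
  obtain ⟨g, hgu, hg⟩ := Set.exists_of_ssubset hX
  have hg0 : (g:ℕ) ≠ 0 := fun e =>
    hg (by rwa [show g = (⟨0, by omega⟩ : Fin n) from Fin.ext e])
  have hgn : (g:ℕ) ≠ n - 1 := fun e =>
    hg (by rwa [show g = (⟨n-1, by omega⟩ : Fin n) from Fin.ext e])
  set I : Set ↥X := {v | (v.val : ℕ) < (g:ℕ)} with hIdef
  have memval : ∀ v : ↥X, (v.val : ℕ) ≠ (g:ℕ) := by
    intro v e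
    apply hg
    have hgv : g = (v.val : Fin n) := Fin.ext e.symm
    rw [hgv]; exact v.2
  have hIint : IsInterval ((P n).induce X) I := by
    intro x hx a ha b hb
    simp only [hIdef, Set.mem_setOf_eq, not_lt] at hx ha hb
    have hxg : (g:ℕ) < (x.val : ℕ) := lt_of_le_of_ne hx (fun e => memval x e.symm)
    simp only [SimpleGraph.comap_adj, Function.Embedding.coe_subtype, P_adj]
    constructor <;> intro h <;> omega
  have hJint : IsInterval ((P n).induce X) Iᶜ := by
    intro x hx a ha b hb
    simp only [hIdef, Set.mem_compl_iff, Set.mem_setOf_eq, not_lt, not_le] at hx ha hb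
    have hag : (g:ℕ) < (a.val : ℕ) := lt_of_le_of_ne ha (fun e => memval a e.symm)
    have hbg : (g:ℕ) < (b.val : ℕ) := lt_of_le_of_ne hb (fun e => memval b e.symm)
    simp only [SimpleGraph.comap_adj, Function.Embedding.coe_subtype, P_adj]
    constructor <;> intro h <;> omega
  have hz : (⟨⟨0, by omega⟩, h0⟩ : ↥X) ∈ I := by
    simp only [hIdef, Set.mem_setOf_eq, Fin.val_mk]
    omega
  have hw : (⟨⟨n-1, by omega⟩, hn1⟩ : ↥X) ∈ Iᶜ := by
    simp only [hIdef, Set.mem_compl_iff, Set.mem_setOf_eq, not_lt, Fin.val_mk]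
    have : (g:ℕ) < n := g.isLt
    omega
  have hIne : I ≠ ∅ := fun e => by rw [e] at hz; exact hz
  have hJne : Iᶜ ≠ ∅ := fun e => by rw [e] at hw; exact hw
  have hIu : I ≠ Set.univ := fun e => by
    apply hJne; rw [e]; simp
  have hJu : Iᶜ ≠ Set.univ := fun e => by
    apply hIne
    rw [← compl_compl I, e]; simp
  rcases hind I hIint with h | h | ⟨x0, hx0⟩
  · exact hIne h
  · exact hIu h
  rcases hind Iᶜ hJint with h | h | ⟨y0, hy0⟩
  · exact hJne h
  · exact hJu h
  have huniv : (Set.univ : Set ↥X) = {x0, y0} := by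
    rw [← Set.union_compl_self I, hy0, hx0]; rfl
  have hcard2 : Nat.card ↥X ≤ 2 := by
    rw [← Set.ncard_univ, huniv]
    exact (Set.ncard_insert_le _ _).trans (by simp)
  have hcc : Nat.card ↥X = X.ncard := Nat.card_coe_set_eq X
  omega
end

section
/- For every n ≥ 8, the indecomposability graph of Q_n has edge set exactly { {1,2}, {2,n}, {n−1,n}, {1,n} }. -/
open SimpleGraph

variable {V : Type*}

def Nadj (n a b : ℕ) : Prop :=
  a ≠ b ∧ ((a + 1 = b ∧ b ≤ n - 3) ∨ (b + 1 = a ∧ a ≤ n - 3) ∨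
    (a = n - 2 ∧ b ≠ n - 2 ∧ b ≠ n - 3) ∨ (b = n - 2 ∧ a ≠ n - 2 ∧ a ≠ n - 3))

lemma Q_adj_iff {n : ℕ} (i j : Fin n) : (Q n).Adj i j ↔ Nadj n (i : ℕ) (j : ℕ) := by
  have h : (i = j) ↔ ((i : ℕ) = (j : ℕ)) := (Fin.val_inj).symm
  simp only [Q, fromRel_adj, Nadj, ne_eq, h]
  tauto

lemma mem_pair_compl {n : ℕ} (x y w : Fin n) :
    w ∈ ({x, y} : Set (Fin n))ᶜ ↔ ((w : ℕ) ≠ (x : ℕ) ∧ (w : ℕ) ≠ (y : ℕ)) := by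
  simp [Fin.ext_iff]

lemma bridge (G : SimpleGraph V) (S : Set V) :
    Indecomposable (G.induce S) ↔
      ∀ J : Set V, J ⊆ S →
        (∀ x ∈ S, x ∉ J → ∀ a ∈ J, ∀ b ∈ J, (G.Adj a x ↔ G.Adj b x)) →
        J = ∅ ∨ J = S ∨ ∃ v, J = {v} := by
  constructor
  · intro hind J hJS hRI
    have hI : IsInterval (G.induce S) {v : S | (v : V) ∈ J} := by
      intro x hx a ha b hb
      have := hRI x x.2 hx a ha b hb
      simpa [SimpleGraph.comap] using this
    rcases hind _ hI with h | h | ⟨v, h⟩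
    · left
      ext w; simp only [Set.mem_empty_iff_false, iff_false]
      intro hw
      have : (⟨w, hJS hw⟩ : S) ∈ {v : S | (v : V) ∈ J} := hw
      rw [h] at this; exact this
    · right; left
      apply Set.Subset.antisymm hJS
      intro w hw
      have : (⟨w, hw⟩ : S) ∈ {v : S | (v : V) ∈ J} := by rw [h]; trivial
      exact this
    · right; right
      refine ⟨v, ?_⟩
      ext w
      constructor
      · intro hw
        have : (⟨w, hJS hw⟩ : S) ∈ {v : S | (v : V) ∈ J} := hw
        rw [h] at this
        simpa using congrArg Subtype.val this
      · intro hw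
        have : v ∈ {u : S | (u : V) ∈ J} := by rw [h]; rfl
        simp only [Set.mem_singleton_iff] at hw
        subst hw; exact this
  · intro h I hI
    have hJS : (Subtype.val '' I : Set V) ⊆ S := by
      rintro _ ⟨a, _, rfl⟩; exact a.2
    have hRI : ∀ x ∈ S, x ∉ Subtype.val '' I → ∀ a ∈ Subtype.val '' I, ∀ b ∈ Subtype.val '' I,
        (G.Adj a x ↔ G.Adj b x) := by
      rintro x hxS hx _ ⟨a, ha, rfl⟩ _ ⟨b, hb, rfl⟩
      have hxI : (⟨x, hxS⟩ : S) ∉ I := fun hh => hx ⟨_, hh, rfl⟩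
      have := hI ⟨x, hxS⟩ hxI a ha b hb
      simpa [SimpleGraph.comap] using this
    rcases h _ hJS hRI with h' | h' | ⟨v, h'⟩
    · left
      ext a; simp only [Set.mem_empty_iff_false, iff_false]
      intro ha
      have : (a : V) ∈ Subtype.val '' I := ⟨a, ha, rfl⟩
      rw [h'] at this; exact this
    · right; left
      ext a; simp only [Set.mem_univ, iff_true]
      have : (a : V) ∈ Subtype.val '' I := by rw [h']; exact a.2
      rcases this with ⟨b, hb, hba⟩
      have : b = a := Subtype.ext hba
      rwa [this] at hb
    · by_cases hne : I = ∅
      · left; exact hne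
      · right; right
        rcases Set.nonempty_iff_ne_empty.2 hne with ⟨a, ha⟩
        refine ⟨a, ?_⟩
        ext b
        constructor
        · intro hb
          have hbv : (b : V) ∈ Subtype.val '' I := ⟨b, hb, rfl⟩
          have hav : (a : V) ∈ Subtype.val '' I := ⟨a, ha, rfl⟩
          rw [h'] at hbv hav
          simp only [Set.mem_singleton_iff] at hbv hav ⊢
          exact Subtype.ext (hbv.trans hav.symm)
        · intro hb; simp only [Set.mem_singleton_iff] at hb; subst hb; exact ha

lemma nontriv (G : SimpleGraph V) (S J : Set V) (hJS : J ⊆ S)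
    (hRI : ∀ x ∈ S, x ∉ J → ∀ a ∈ J, ∀ b ∈ J, (G.Adj a x ↔ G.Adj b x))
    {u v w : V} (hu : u ∈ J) (hv : v ∈ J) (huv : u ≠ v) (hw : w ∈ S) (hwJ : w ∉ J) :
    ¬ Indecomposable (G.induce S) := by
  intro hind
  rcases (bridge G S).mp hind J hJS hRI with h | h | ⟨t, h⟩
  · rw [h] at hu; exact hu
  · exact hwJ (by rw [h]; exact hw)
  · rw [h] at hu hv
    simp only [Set.mem_singleton_iff] at hu hv
    exact huv (hu.trans hv.symm)

lemma grow {n lo hi : ℕ} (h8 : 8 ≤ n) (hhi : hi ≤ n - 3) {K SN : ℕ → Prop}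
    (hS : ∀ z, lo ≤ z → z ≤ hi → SN z)
    (RI : ∀ z a b, z < n → a < n → b < n → SN z → ¬K z → K a → K b →
      (Nadj n a z ↔ Nadj n b z))
    {j : ℕ} (hlo : lo ≤ j) (hj1 : j + 1 ≤ hi) (k0 : K j) (k1 : K (j + 1)) :
    ∀ i, lo ≤ i → i ≤ hi → K i := by
  have down : ∀ k i, i + k = j → lo ≤ i → K i ∧ K (i + 1) := by
    intro k
    induction k with
    | zero =>
      intro i hij _
      have hij' : i = j := by omega
      subst hij'; exact ⟨k0, k1⟩
    | succ k ih =>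
      intro i hij hloi
      have ih' := ih (i + 1) (by omega) (by omega)
      refine ⟨?_, ih'.1⟩
      by_cases hKi : K i
      · exact hKi
      · exfalso
        have hiff := RI i (i + 1) (i + 2) (by omega) (by omega) (by omega)
          (hS i hloi (by omega)) hKi ih'.1 ih'.2
        have hT : Nadj n (i + 1) i := by unfold Nadj; omega
        have hF : ¬ Nadj n (i + 2) i := by unfold Nadj; omega
        exact hF (hiff.mp hT)
  have up : ∀ k, j + 1 + k ≤ hi → K (j + k) ∧ K (j + 1 + k) := by
    intro k
    induction k with
    | zero => intro _; exact ⟨k0, k1⟩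
    | succ k ih =>
      intro hk
      have ih' := ih (by omega)
      have heq : j + (k + 1) = j + 1 + k := by omega
      refine ⟨heq ▸ ih'.2, ?_⟩
      by_cases hKm : K (j + 1 + (k + 1))
      · exact hKm
      · exfalso
        have hiff := RI (j + 1 + (k + 1)) (j + 1 + k) (j + k) (by omega) (by omega) (by omega)
          (hS _ (by omega) (by omega)) hKm ih'.2 ih'.1
        have hT : Nadj n (j + 1 + k) (j + 1 + (k + 1)) := by unfold Nadj; omega
        have hF : ¬ Nadj n (j + k) (j + 1 + (k + 1)) := by unfold Nadj; omega
        exact hF (hiff.mp hT)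
  intro i hloi hihi
  rcases le_or_gt i j with h | h
  · exact (down (j - i) i (by omega) hloi).1
  · have h2 := (up (i - (j + 1)) (by omega)).2
    have he : j + 1 + (i - (j + 1)) = i := by omega
    rwa [he] at h2

/-- nat-level relative-interval fact extractor. -/
lemma natify {n : ℕ} {S J : Set (Fin n)} {SN : ℕ → Prop}
    (hSN : ∀ w : Fin n, w ∈ S ↔ SN (w : ℕ))
    (hRI : ∀ x ∈ S, x ∉ J → ∀ a ∈ J, ∀ b ∈ J, ((Q n).Adj a x ↔ (Q n).Adj b x)) :
    ∀ z a b : ℕ, z < n → a < n → b < n → SN z →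
      ¬(∃ h : z < n, (⟨z, h⟩ : Fin n) ∈ J) →
      (∃ h : a < n, (⟨a, h⟩ : Fin n) ∈ J) →
      (∃ h : b < n, (⟨b, h⟩ : Fin n) ∈ J) →
      (Nadj n a z ↔ Nadj n b z) := by
  rintro z a b hz ha hb hSz hKz ⟨ha', hKa⟩ ⟨hb', hKb⟩
  have h := hRI ⟨z, hz⟩ ((hSN _).2 hSz) (fun hm => hKz ⟨hz, hm⟩) _ hKa _ hKb
  rw [Q_adj_iff, Q_adj_iff] at h
  exact h

lemma mem_of_K {n : ℕ} {J : Set (Fin n)} (w : Fin n)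
    (h : ∃ hk : (w : ℕ) < n, (⟨(w : ℕ), hk⟩ : Fin n) ∈ J) : w ∈ J := by
  rcases h with ⟨hk, hm⟩
  rwa [Fin.eta] at hm

lemma K_of_mem {n : ℕ} {J : Set (Fin n)} (w : Fin n) (h : w ∈ J) :
    ∃ hk : (w : ℕ) < n, (⟨(w : ℕ), hk⟩ : Fin n) ∈ J := ⟨w.isLt, by rwa [Fin.eta]⟩

lemma two_elts {J : Set V} :
    J = ∅ ∨ (∃ v, J = {v}) ∨ ∃ u v, u ∈ J ∧ v ∈ J ∧ u ≠ v := by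
  classical
  rcases Set.eq_empty_or_nonempty J with h | ⟨u, hu⟩
  · exact Or.inl h
  by_cases h1 : ∀ w ∈ J, w = u
  · refine Or.inr (Or.inl ⟨u, ?_⟩)
    ext w
    simp only [Set.mem_singleton_iff]
    exact ⟨fun hw => h1 w hw, fun hw => hw ▸ hu⟩
  · push_neg at h1
    obtain ⟨w, hw, hwu⟩ := h1
    exact Or.inr (Or.inr ⟨w, u, hw, hu, hwu⟩)

lemma indec_S1 {n : ℕ} (hn : 8 ≤ n) (u v : Fin n)
    (hu : (u : ℕ) = n - 2) (hv : (v : ℕ) = n - 1) :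
    Indecomposable ((Q n).induce (({u, v} : Set (Fin n))ᶜ)) := by
  rw [bridge]
  intro J hJS hRI
  rcases two_elts (J := J) with h | h | ⟨w0, w1, hw0, hw1, hne⟩
  · exact Or.inl h
  · exact Or.inr (Or.inr h)
  right; left
  set SN : ℕ → Prop := fun z => z ≤ n - 3 with hSNdef
  have hSN : ∀ w : Fin n, w ∈ ({u, v} : Set (Fin n))ᶜ ↔ SN (w : ℕ) := by
    intro w
    rw [mem_pair_compl]
    have := w.isLt
    simp only [hSNdef, hu, hv]
    omega
  set K : ℕ → Prop := fun k => ∃ hk : k < n, (⟨k, hk⟩ : Fin n) ∈ J with hKdef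
  have RIn := natify hSN hRI
  have growapp : ∀ j, j + 1 ≤ n - 3 → K j → K (j + 1) → ∀ i, i ≤ n - 3 → K i := by
    intro j h1 k0 k1 i hi
    exact grow hn le_rfl (fun z _ hz => hz) RIn (Nat.zero_le _) h1 k0 k1 i (Nat.zero_le _) hi
  have key : ∀ p q, p < q → q ≤ n - 3 → K p → K q → ∀ i, i ≤ n - 3 → K i := by
    intro p q hpq hq hKp hKq
    by_cases hc : q = p + 1
    · exact growapp p (by omega) hKp (hc ▸ hKq)
    by_cases hK1 : K (p + 1)
    · exact growapp p (by omega) hKp hK1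
    have hiff := RIn (p + 1) p q (by omega) (by omega) (by omega) (by omega) hK1 hKp hKq
    have hq2 : q = p + 2 := by unfold Nadj at hiff; omega
    subst hq2
    by_cases hK3 : p + 3 ≤ n - 3
    · by_cases hKp3 : K (p + 3)
      · exact growapp (p + 2) (by omega) hKq hKp3
      · exfalso
        have h2 := RIn (p + 3) (p + 2) p (by omega) (by omega) (by omega) (by omega) hKp3 hKq hKp
        unfold Nadj at h2; omega
    · -- p = n-5, q = n-3
      by_cases hKm : K (p - 1)
      · have hpe : p - 1 + 1 = p := by omega
        exact growapp (p - 1) (by omega) hKm (hpe ▸ hKp)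
      · exfalso
        have h2 := RIn (p - 1) p (p + 2) (by omega) (by omega) (by omega) (by omega) hKm hKp hKq
        unfold Nadj at h2; omega
  have hw0S := (hSN w0).1 (hJS hw0)
  have hw1S := (hSN w1).1 (hJS hw1)
  have hK0 : K (w0 : ℕ) := K_of_mem w0 hw0
  have hK1 : K (w1 : ℕ) := K_of_mem w1 hw1
  have hvne : (w0 : ℕ) ≠ (w1 : ℕ) := fun h => hne (Fin.val_inj.mp h)
  have allK : ∀ i, i ≤ n - 3 → K i := by
    rcases Nat.lt_or_ge (w0 : ℕ) (w1 : ℕ) with h | h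
    · exact key _ _ h hw1S hK0 hK1
    · exact key _ _ (by omega) hw0S hK1 hK0
  ext w
  constructor
  · exact fun h => hJS h
  · intro hw
    exact mem_of_K w (allK (w : ℕ) ((hSN w).1 hw))

lemma indec_S2 {n : ℕ} (hn : 8 ≤ n) (u v : Fin n)
    (hu : (u : ℕ) = 0) (hv : (v : ℕ) = n - 1) :
    Indecomposable ((Q n).induce (({u, v} : Set (Fin n))ᶜ)) := by
  rw [bridge]
  intro J hJS hRI
  rcases two_elts (J := J) with h | h | ⟨w0, w1, hw0, hw1, hne⟩
  · exact Or.inl h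
  · exact Or.inr (Or.inr h)
  right; left
  set SN : ℕ → Prop := fun z => 1 ≤ z ∧ z ≤ n - 2 with hSNdef
  have hSN : ∀ w : Fin n, w ∈ ({u, v} : Set (Fin n))ᶜ ↔ SN (w : ℕ) := by
    intro w
    rw [mem_pair_compl]
    have := w.isLt
    simp only [hSNdef, hu, hv]
    omega
  set K : ℕ → Prop := fun k => ∃ hk : k < n, (⟨k, hk⟩ : Fin n) ∈ J with hKdef
  have RIn := natify hSN hRI
  -- from a consecutive path pair, get all path vertices then the hub
  have growapp : ∀ j, 1 ≤ j → j + 1 ≤ n - 3 → K j → K (j + 1) →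
      ∀ i, 1 ≤ i → i ≤ n - 2 → K i := by
    intro j h0 h1 k0 k1
    have hpath : ∀ i, 1 ≤ i → i ≤ n - 3 → K i := by
      intro i hi1 hi2
      exact grow hn le_rfl (fun z hz1 hz2 => ⟨hz1, by omega⟩) RIn h0 h1 k0 k1 i hi1 hi2
    have hhub : K (n - 2) := by
      by_cases hK : K (n - 2)
      · exact hK
      exfalso
      have h2 := RIn (n - 2) 1 (n - 3) (by omega) (by omega) (by omega) (by omega) hK
        (hpath 1 le_rfl (by omega)) (hpath (n - 3) (by omega) le_rfl)
      unfold Nadj at h2; omega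
    intro i hi1 hi2
    rcases Nat.lt_or_ge i (n - 2) with h | h
    · exact hpath i hi1 (by omega)
    · have : i = n - 2 := by omega
      exact this ▸ hhub
  have key : ∀ p q, p < q → 1 ≤ p → q ≤ n - 2 → K p → K q →
      ∀ i, 1 ≤ i → i ≤ n - 2 → K i := by
    intro p q hpq hp1 hq hKp hKq
    rcases Nat.lt_or_ge q (n - 2) with hqpath | hqhub
    · -- both are path vertices
      by_cases hc : q = p + 1
      · exact growapp p hp1 (by omega) hKp (hc ▸ hKq)
      by_cases hK1 : K (p + 1)
      · exact growapp p hp1 (by omega) hKp hK1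
      have hiff := RIn (p + 1) p q (by omega) (by omega) (by omega) (by omega) hK1 hKp hKq
      have hq2 : q = p + 2 := by unfold Nadj at hiff; omega
      subst hq2
      by_cases hK3 : p + 3 ≤ n - 3
      · by_cases hKp3 : K (p + 3)
        · exact growapp (p + 2) (by omega) (by omega) hKq hKp3
        · exfalso
          have h2 := RIn (p + 3) (p + 2) p (by omega) (by omega) (by omega) (by omega)
            hKp3 hKq hKp
          unfold Nadj at h2; omega
      · by_cases hKm : K (p - 1)
        · have hpe : p - 1 + 1 = p := by omega
          exact growapp (p - 1) (by omega) (by omega) hKm (hpe ▸ hKp)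
        · exfalso
          have h2 := RIn (p - 1) p (p + 2) (by omega) (by omega) (by omega) (by omega)
            hKm hKp hKq
          unfold Nadj at h2; omega
    · -- q = n-2 is the hub, p is a path vertex, 1 ≤ p ≤ n-3
      have hqe : q = n - 2 := by omega
      subst hqe
      -- rule: any path vertex ≤ n-4 away from p is in K
      have rule : ∀ s, K s → s ≤ n - 3 → ∀ x, 1 ≤ x → x ≤ n - 4 →
          x ≠ s - 1 → x ≠ s → x ≠ s + 1 → K x := by
        intro s hKs hs x hx1 hx2 hxa hxb hxc
        by_cases hKx : K x
        · exact hKx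
        exfalso
        have h2 := RIn x (n - 2) s (by omega) (by omega) (by omega) (by omega) hKx hKq hKs
        unfold Nadj at h2; omega
      rcases Nat.lt_or_ge p (n - 4) with hplt | hpge
      · -- p ≤ n-5
        set u1 : ℕ := if 3 ≤ p then 1 else p + 2 with hu1def
        have hKu1 : K u1 ∧ 1 ≤ u1 ∧ u1 ≤ n - 4 ∧ (u1 + 2 ≤ p ∨ p + 2 ≤ u1) := by
          rw [hu1def]
          split_ifs with h3
          · exact ⟨rule p hKp (by omega) 1 (by omega) (by omega) (by omega) (by omega)
              (by omega), by omega, by omega, by omega⟩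
          · exact ⟨rule p hKp (by omega) (p + 2) (by omega) (by omega) (by omega) (by omega)
              (by omega), by omega, by omega, by omega⟩
        obtain ⟨hKu1', hu11, hu14, hu1p⟩ := hKu1
        set e : ℕ := if 3 ≤ p then 2 else p + 1 with hedef
        have hK3 : ∀ x, 1 ≤ x → x ≤ n - 4 → x ≠ e → K x := by
          intro x hx1 hx4 hxe
          by_cases hxp : x = p
          · exact hxp ▸ hKp
          by_cases hxu : x = u1
          · exact hxu ▸ hKu1'
          by_cases hr1 : x ≠ p - 1 ∧ x ≠ p + 1
          · exact rule p hKp (by omega) x hx1 hx4 hr1.1 hxp hr1.2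
          · -- x ∈ {p-1, p+1}; show it avoids u1's neighborhood
            apply rule u1 hKu1' (by omega) x hx1 hx4
            all_goals
              rw [hedef] at hxe
              rw [hu1def] at *
              split_ifs at * <;> omega
        by_cases he12 : e = 1 ∨ e = 2
        · exact growapp 3 (by omega) (by omega)
            (hK3 3 (by omega) (by omega) (by omega)) (hK3 4 (by omega) (by omega) (by omega))
        · exact growapp 1 (by omega) (by omega)
            (hK3 1 (by omega) (by omega) (by omega)) (hK3 2 (by omega) (by omega) (by omega))
      · -- p = n-4 or p = n-3
        rcases Nat.lt_or_ge p (n - 3) with hp4 | hp3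
        · -- p = n-4 : get n-3 ∈ K
          have hpe : p = n - 4 := by omega
          subst hpe
          have hKn3 : K (n - 3) := by
            by_cases hK : K (n - 3)
            · exact hK
            exfalso
            have h2 := RIn (n - 3) (n - 2) (n - 4) (by omega) (by omega) (by omega)
              (by omega) hK hKq hKp
            unfold Nadj at h2; omega
          have h4 : n - 4 + 1 = n - 3 := by omega
          exact growapp (n - 4) (by omega) (by omega) hKp (h4 ▸ hKn3)
        · -- p = n-3
          have hpe : p = n - 3 := by omega
          subst hpe
          exact growapp 1 (by omega) (by omega)
            (rule (n - 3) hKp (by omega) 1 (by omega) (by omega) (by omega) (by omega) (by omega))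
            (rule (n - 3) hKp (by omega) 2 (by omega) (by omega) (by omega) (by omega) (by omega))
  have hw0S := (hSN w0).1 (hJS hw0)
  have hw1S := (hSN w1).1 (hJS hw1)
  have hK0 : K (w0 : ℕ) := K_of_mem w0 hw0
  have hK1 : K (w1 : ℕ) := K_of_mem w1 hw1
  have hvne : (w0 : ℕ) ≠ (w1 : ℕ) := fun h => hne (Fin.val_inj.mp h)
  have allK : ∀ i, 1 ≤ i → i ≤ n - 2 → K i := by
    rcases Nat.lt_or_ge (w0 : ℕ) (w1 : ℕ) with h | h
    · exact key _ _ h hw0S.1 hw1S.2 hK0 hK1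
    · exact key _ _ (by omega) hw1S.1 hw0S.2 hK1 hK0
  ext w
  constructor
  · exact fun h => hJS h
  · intro hw
    obtain ⟨h1, h2⟩ := (hSN w).1 hw
    exact mem_of_K w (allK (w : ℕ) h1 h2)

lemma indec_S34 {n : ℕ} (hn : 8 ≤ n) (u v : Fin n) (q : ℕ) (hq : q = 0 ∨ q = n - 1)
    (hSN : ∀ w : Fin n, w ∈ ({u, v} : Set (Fin n))ᶜ ↔
      ((2 ≤ (w : ℕ) ∧ (w : ℕ) ≤ n - 2) ∨ (w : ℕ) = q)) :
    Indecomposable ((Q n).induce (({u, v} : Set (Fin n))ᶜ)) := by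
  rw [bridge]
  intro J hJS hRI
  rcases two_elts (J := J) with h | h | ⟨w0, w1, hw0, hw1, hne⟩
  · exact Or.inl h
  · exact Or.inr (Or.inr h)
  right; left
  set SN : ℕ → Prop := fun z => (2 ≤ z ∧ z ≤ n - 2) ∨ z = q with hSNdef
  have hSN' : ∀ w : Fin n, w ∈ ({u, v} : Set (Fin n))ᶜ ↔ SN (w : ℕ) := hSN
  set K : ℕ → Prop := fun k => ∃ hk : k < n, (⟨k, hk⟩ : Fin n) ∈ J with hKdef
  have RIn := natify hSN' hRI
  have hqlt : q < n := by rcases hq with h | h <;> omega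
  -- consecutive path pair ⇒ everything
  have growapp : ∀ j, 2 ≤ j → j + 1 ≤ n - 3 → K j → K (j + 1) →
      ∀ i, SN i → K i := by
    intro j h0 h1 k0 k1
    have hpath : ∀ i, 2 ≤ i → i ≤ n - 3 → K i := by
      intro i hi1 hi2
      exact grow hn le_rfl (fun z hz1 hz2 => Or.inl ⟨hz1, by omega⟩) RIn h0 h1 k0 k1 i hi1 hi2
    have hhub : K (n - 2) := by
      by_cases hK : K (n - 2)
      · exact hK
      exfalso
      have h2 := RIn (n - 2) 2 (n - 3) (by omega) (by omega) (by omega) (by left; omega) hK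
        (hpath 2 le_rfl (by omega)) (hpath (n - 3) (by omega) le_rfl)
      unfold Nadj at h2; omega
    have hpend : K q := by
      by_cases hK : K q
      · exact hK
      exfalso
      have h2 := RIn q (n - 2) 2 hqlt (by omega) (by omega) (Or.inr rfl) hK hhub
        (hpath 2 le_rfl (by omega))
      rcases hq with hqe | hqe <;> (subst hqe; unfold Nadj at h2; omega)
    intro i hi
    rcases hi with ⟨hi1, hi2⟩ | hiq
    · rcases Nat.lt_or_ge i (n - 2) with h | h
      · exact hpath i hi1 (by omega)
      · have : i = n - 2 := by omega
        exact this ▸ hhub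
    · exact hiq ▸ hpend
  -- pendant q together with a path vertex ⇒ everything
  have pendantpath : ∀ w, 2 ≤ w → w ≤ n - 3 → K w → K q → ∀ i, SN i → K i := by
    intro w h2w h3w hKw hKq
    rcases Nat.lt_or_ge w (n - 3) with hw4 | hw3
    · -- w ≤ n-4 : get w+1
      by_cases hK : K (w + 1)
      · exact growapp w h2w (by omega) hKw hK
      exfalso
      have h2 := RIn (w + 1) w q (by omega) (by omega) hqlt (by left; omega) hK hKw hKq
      rcases hq with hqe | hqe <;> (subst hqe; unfold Nadj at h2; omega)
    · -- w = n-3 : get n-4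
      have hwe : w = n - 3 := by omega
      subst hwe
      by_cases hK : K (n - 4)
      · have h4 : n - 4 + 1 = n - 3 := by omega
        exact growapp (n - 4) (by omega) (by omega) hK (h4 ▸ hKw)
      exfalso
      have h2 := RIn (n - 4) (n - 3) q (by omega) (by omega) hqlt (by left; omega) hK hKw hKq
      rcases hq with hqe | hqe <;> (subst hqe; unfold Nadj at h2; omega)
  -- hub together with a path vertex ⇒ everything
  have hubpath : ∀ w, 2 ≤ w → w ≤ n - 3 → K w → K (n - 2) → ∀ i, SN i → K i := by
    intro w h2w h3w hKw hKhub
    by_cases hK : K q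
    · exact pendantpath w h2w h3w hKw hK
    exfalso
    have h2 := RIn q (n - 2) w hqlt (by omega) (by omega) (Or.inr rfl) hK hKhub hKw
    rcases hq with hqe | hqe <;> (subst hqe; unfold Nadj at h2; omega)
  -- main case analysis on two distinct elements
  have key : ∀ p r, p ≠ r → SN p → SN r → K p → K r → ∀ i, SN i → K i := by
    -- first handle the case where both are path vertices, p < r
    have bothpath : ∀ p r, p < r → 2 ≤ p → r ≤ n - 3 → K p → K r → ∀ i, SN i → K i := by
      intro p r hpr hp2 hr3 hKp hKr
      by_cases hc : r = p + 1
      · exact growapp p hp2 (by omega) hKp (hc ▸ hKr)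
      by_cases hK1 : K (p + 1)
      · exact growapp p hp2 (by omega) hKp hK1
      have hiff := RIn (p + 1) p r (by omega) (by omega) (by omega) (by left; omega) hK1 hKp hKr
      have hr2 : r = p + 2 := by unfold Nadj at hiff; omega
      subst hr2
      by_cases hK3 : p + 3 ≤ n - 3
      · by_cases hKp3 : K (p + 3)
        · exact growapp (p + 2) (by omega) (by omega) hKr hKp3
        · exfalso
          have h2 := RIn (p + 3) (p + 2) p (by omega) (by omega) (by omega) (by left; omega)
            hKp3 hKr hKp
          unfold Nadj at h2; omega
      · by_cases hKm : K (p - 1)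
        · have hpe : p - 1 + 1 = p := by omega
          exact growapp (p - 1) (by omega) (by omega) hKm (hpe ▸ hKp)
        · exfalso
          have h2 := RIn (p - 1) p (p + 2) (by omega) (by omega) (by omega) (by left; omega)
            hKm hKp hKr
          unfold Nadj at h2; omega
    -- hub + pendant ⇒ everything
    have hubpend : K (n - 2) → K q → ∀ i, SN i → K i := by
      intro hKhub hKq
      by_cases hK : K 2
      · exact hubpath 2 le_rfl (by omega) hK hKhub
      exfalso
      have h2 := RIn 2 (n - 2) q (by omega) (by omega) hqlt (by left; omega) hK hKhub hKq
      rcases hq with hqe | hqe <;> (subst hqe; unfold Nadj at h2; omega)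
    intro p r hpr hSp hSr hKp hKr
    -- classify p and r
    rcases hSp with ⟨hp2, hpn2⟩ | hpq
    · rcases hSr with ⟨hr2, hrn2⟩ | hrq
      · -- both in [2, n-2]
        rcases Nat.lt_or_ge p (n - 2) with hp | hp
        · rcases Nat.lt_or_ge r (n - 2) with hr | hr
          · -- both path
            rcases Nat.lt_or_ge p r with h | h
            · exact bothpath p r h hp2 (by omega) hKp hKr
            · exact bothpath r p (by omega) hr2 (by omega) hKr hKp
          · exact hubpath p hp2 (by omega) hKp (by rw [(by omega : r = n - 2)] at hKr; exact hKr)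
        · rcases Nat.lt_or_ge r (n - 2) with hr | hr
          · exact hubpath r hr2 (by omega) hKr (by rw [(by omega : p = n - 2)] at hKp; exact hKp)
          · omega
      · -- r = q
        rcases Nat.lt_or_ge p (n - 2) with hp | hp
        · exact pendantpath p hp2 (by omega) hKp (hrq ▸ hKr)
        · exact hubpend (by rw [(by omega : p = n - 2)] at hKp; exact hKp) (hrq ▸ hKr)
    · -- p = q
      rcases hSr with ⟨hr2, hrn2⟩ | hrq
      · rcases Nat.lt_or_ge r (n - 2) with hr | hr
        · exact pendantpath r hr2 (by omega) hKr (hpq ▸ hKp)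
        · exact hubpend (by rw [(by omega : r = n - 2)] at hKr; exact hKr) (hpq ▸ hKp)
      · omega
  have hw0S := (hSN' w0).1 (hJS hw0)
  have hw1S := (hSN' w1).1 (hJS hw1)
  have hvne : (w0 : ℕ) ≠ (w1 : ℕ) := fun h => hne (Fin.val_inj.mp h)
  have allK := key _ _ hvne hw0S hw1S (K_of_mem w0 hw0) (K_of_mem w1 hw1)
  ext w
  constructor
  · exact fun h => hJS h
  · intro hw
    exact mem_of_K w (allK (w : ℕ) ((hSN' w).1 hw))

lemma decomp_witness {n : ℕ} (hn : 8 ≤ n) (x y : Fin n) (P : ℕ → Prop)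
    (hsub : ∀ k, k < n → P k → k ≠ (x : ℕ) ∧ k ≠ (y : ℕ))
    (hiff : ∀ z p r : ℕ, z < n → p < n → r < n → z ≠ (x : ℕ) → z ≠ (y : ℕ) → ¬ P z →
      P p → P r → (Nadj n p z ↔ Nadj n r z))
    (k1 k2 k3 : ℕ) (h1 : k1 < n) (h2 : k2 < n) (h3 : k3 < n)
    (hP1 : P k1) (hP2 : P k2) (h12 : k1 ≠ k2) (hP3 : ¬ P k3)
    (h3x : k3 ≠ (x : ℕ)) (h3y : k3 ≠ (y : ℕ)) :
    ¬ Indecomposable ((Q n).induce (({x, y} : Set (Fin n))ᶜ)) := by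
  apply nontriv (Q n) _ {w : Fin n | P (w : ℕ)}
    (u := ⟨k1, h1⟩) (v := ⟨k2, h2⟩) (w := ⟨k3, h3⟩)
  · intro w hw
    rw [mem_pair_compl]
    exact hsub _ w.isLt hw
  · intro z hz hzJ p hp r hr
    rw [Q_adj_iff, Q_adj_iff]
    rw [mem_pair_compl] at hz
    exact hiff _ _ _ z.isLt p.isLt r.isLt hz.1 hz.2 hzJ hp hr
  · simpa only [Set.mem_setOf_eq, Fin.val_mk] using hP1
  · simpa only [Set.mem_setOf_eq, Fin.val_mk] using hP2
  · simp only [ne_eq, Fin.mk.injEq]; exact h12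
  · rw [mem_pair_compl]; simp only [Fin.val_mk]; exact ⟨h3x, h3y⟩
  · simpa only [Set.mem_setOf_eq, Fin.val_mk] using hP3

lemma decomp1 {n : ℕ} (hn : 8 ≤ n) (x y : Fin n) (hx : (x : ℕ) ≤ n - 3)
    (hy : (y : ℕ) = n - 2) :
    ¬ Indecomposable ((Q n).induce (({x, y} : Set (Fin n))ᶜ)) := by
  obtain ⟨k1, k2, hk1, hk2, hne, hx1, hx2⟩ :
      ∃ k1 k2, k1 < 3 ∧ k2 < 3 ∧ k1 ≠ k2 ∧ k1 ≠ (x : ℕ) ∧ k2 ≠ (x : ℕ) := by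
    by_cases h0 : (x : ℕ) = 0
    · exact ⟨1, 2, by omega, by omega, by omega, by omega, by omega⟩
    by_cases h1 : (x : ℕ) = 1
    · exact ⟨0, 2, by omega, by omega, by omega, by omega, by omega⟩
    · exact ⟨0, 1, by omega, by omega, by omega, by omega, by omega⟩
  refine decomp_witness hn x y
    (fun k => k ≠ (x : ℕ) ∧ k ≠ n - 2 ∧ k ≠ n - 1) ?_ ?_
    k1 k2 (n - 1) (by omega) (by omega) (by omega) (by omega) (by omega)
    hne (by omega) (by omega) (by omega)
  · intro k hk hP; exact ⟨hP.1, by omega⟩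
  · intro z p r hz hp hr hzx hzy hPz hPp hPr
    unfold Nadj; omega

lemma decomp2 {n : ℕ} (hn : 8 ≤ n) (x y : Fin n) (ha2 : 2 ≤ (x : ℕ))
    (ha3 : (x : ℕ) ≤ n - 3) (hlt : (x : ℕ) < (y : ℕ)) (hyn2 : (y : ℕ) ≠ n - 2) :
    ¬ Indecomposable ((Q n).induce (({x, y} : Set (Fin n))ᶜ)) := by
  have hy := y.isLt
  refine decomp_witness hn x y (fun k => k < (x : ℕ)) ?_ ?_
    0 1 (n - 2) (by omega) (by omega) (by omega) (by omega) (by omega)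
    (by omega) (by omega) (by omega) (by omega)
  · intro k hk hP; omega
  · intro z p r hz hp hr hzx hzy hPz hPp hPr
    unfold Nadj; omega

lemma decomp3 {n : ℕ} (hn : 8 ≤ n) (x y : Fin n) (hx : (x : ℕ) = 0)
    (hy : (y : ℕ) = 2) :
    ¬ Indecomposable ((Q n).induce (({x, y} : Set (Fin n))ᶜ)) := by
  refine decomp_witness hn x y (fun k => k = 1 ∨ k = n - 1) ?_ ?_
    1 (n - 1) (n - 2) (by omega) (by omega) (by omega) (by omega) (by omega)
    (by omega) (by omega) (by omega) (by omega)
  · intro k hk hP; omega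
  · intro z p r hz hp hr hzx hzy hPz hPp hPr
    unfold Nadj; omega

lemma decomp4 {n : ℕ} (hn : 8 ≤ n) (x y : Fin n) (hx : (x : ℕ) = 0)
    (hy3 : 3 ≤ (y : ℕ)) (hy : (y : ℕ) ≤ n - 3) :
    ¬ Indecomposable ((Q n).induce (({x, y} : Set (Fin n))ᶜ)) := by
  refine decomp_witness hn x y (fun k => 1 ≤ k ∧ k < (y : ℕ)) ?_ ?_
    1 2 (n - 2) (by omega) (by omega) (by omega) (by omega) (by omega)
    (by omega) (by omega) (by omega) (by omega)
  · intro k hk hP; omega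
  · intro z p r hz hp hr hzx hzy hPz hPp hPr
    unfold Nadj; omega

lemma decomp5 {n : ℕ} (hn : 8 ≤ n) (x y : Fin n) (hx : (x : ℕ) = 1)
    (hy2 : 2 ≤ (y : ℕ)) (hy : (y : ℕ) ≤ n - 3) :
    ¬ Indecomposable ((Q n).induce (({x, y} : Set (Fin n))ᶜ)) := by
  refine decomp_witness hn x y (fun k => k = 0 ∨ k = n - 1) ?_ ?_
    0 (n - 1) (n - 2) (by omega) (by omega) (by omega) (by omega) (by omega)
    (by omega) (by omega) (by omega) (by omega)
  · intro k hk hP; omega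
  · intro z p r hz hp hr hzx hzy hPz hPp hPr
    unfold Nadj; omega

lemma main_lt {n : ℕ} (hn : 8 ≤ n) (x y : Fin n) (hlt : (x : ℕ) < (y : ℕ)) :
    Indecomposable ((Q n).induce (({x, y} : Set (Fin n))ᶜ)) ↔
      (({x, y} : Set (Fin n)) = {⟨0, by omega⟩, ⟨1, by omega⟩} ∨
       ({x, y} : Set (Fin n)) = {⟨1, by omega⟩, ⟨n - 1, by omega⟩} ∨
       ({x, y} : Set (Fin n)) = {⟨n - 2, by omega⟩, ⟨n - 1, by omega⟩} ∨
       ({x, y} : Set (Fin n)) = {⟨0, by omega⟩, ⟨n - 1, by omega⟩}) := by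
  have hxlt := x.isLt
  have hylt := y.isLt
  have hgood : ∀ (c d : ℕ) (hc : c < n) (hd : d < n), (x : ℕ) = c → (y : ℕ) = d →
      ({x, y} : Set (Fin n)) = {⟨c, hc⟩, ⟨d, hd⟩} := by
    intro c d hc hd h1 h2
    rw [show x = ⟨c, hc⟩ from Fin.ext h1, show y = ⟨d, hd⟩ from Fin.ext h2]
  constructor
  · intro hind
    by_cases hb2 : (y : ℕ) = n - 2
    · exact absurd hind (decomp1 hn x y (by omega) hb2)
    by_cases ha0 : (x : ℕ) = 0
    · by_cases hb1 : (y : ℕ) = 1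
      · exact Or.inl (hgood 0 1 (by omega) (by omega) ha0 hb1)
      by_cases hbn1 : (y : ℕ) = n - 1
      · exact Or.inr (Or.inr (Or.inr (hgood 0 (n - 1) (by omega) (by omega) ha0 hbn1)))
      by_cases hby2 : (y : ℕ) = 2
      · exact absurd hind (decomp3 hn x y ha0 hby2)
      · exact absurd hind (decomp4 hn x y ha0 (by omega) (by omega))
    by_cases ha1 : (x : ℕ) = 1
    · by_cases hbn1 : (y : ℕ) = n - 1
      · exact Or.inr (Or.inl (hgood 1 (n - 1) (by omega) (by omega) ha1 hbn1))
      · exact absurd hind (decomp5 hn x y ha1 (by omega) (by omega))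
    by_cases han2 : (x : ℕ) = n - 2
    · have hbn1 : (y : ℕ) = n - 1 := by omega
      exact Or.inr (Or.inr (Or.inl (hgood (n - 2) (n - 1) (by omega) (by omega) han2 hbn1)))
    · exact absurd hind (decomp2 hn x y (by omega) (by omega) hlt hb2)
  · intro h
    rcases h with h | h | h | h
    · rw [h]
      refine indec_S34 hn _ _ (n - 1) (Or.inr rfl) ?_
      intro w
      rw [mem_pair_compl]
      have := w.isLt
      simp only [Fin.val_mk]
      omega
    · rw [h]
      refine indec_S34 hn _ _ 0 (Or.inl rfl) ?_
      intro w
      rw [mem_pair_compl]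
      have := w.isLt
      simp only [Fin.val_mk]
      omega
    · rw [h]
      exact indec_S1 hn _ _ (by simp only [Fin.val_mk]) (by simp only [Fin.val_mk])
    · rw [h]
      exact indec_S2 hn _ _ (by simp only [Fin.val_mk]) (by simp only [Fin.val_mk])

theorem indec_graph_Q_ge_eight (n : ℕ) (hn : 8 ≤ n) (x y : Fin n) (hxy : x ≠ y) :
    Indecomposable ((Q n).induce (({x, y} : Set (Fin n))ᶜ)) ↔
      (({x, y} : Set (Fin n)) = {⟨0, by omega⟩, ⟨1, by omega⟩} ∨
       ({x, y} : Set (Fin n)) = {⟨1, by omega⟩, ⟨n - 1, by omega⟩} ∨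
       ({x, y} : Set (Fin n)) = {⟨n - 2, by omega⟩, ⟨n - 1, by omega⟩} ∨
       ({x, y} : Set (Fin n)) = {⟨0, by omega⟩, ⟨n - 1, by omega⟩}) := by
  have hne : (x : ℕ) ≠ (y : ℕ) := fun h => hxy (Fin.val_inj.mp h)
  rcases Nat.lt_or_ge (x : ℕ) (y : ℕ) with h | h
  · exact main_lt hn x y h
  · have h' : (y : ℕ) < (x : ℕ) := by omega
    have := main_lt hn y x h'
    rwa [Set.pair_comm y x] at this
end

section
/- If G is an {a,b}-minimal graph with at least 6 vertices (a ≠ b), then the indecomposability graph I(G) is covered by the vertex set {a,b}: every edge of I(G) contains a or b. -/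
open SimpleGraph

variable {V : Type*}

theorem minimal_covered {V : Type*} [Fintype V] (G : SimpleGraph V) (a b : V)
    (hab : a ≠ b) (hcard : 6 ≤ Fintype.card V) (hmin : IsMinimal G a b) :
    ∀ x y : V, x ≠ y →
      Indecomposable (G.induce (({x, y} : Set V)ᶜ)) →
      x = a ∨ x = b ∨ y = a ∨ y = b := by
  intro x y hxy hind
  by_contra h
  push_neg at h
  obtain ⟨hxa, hxb, hya, hyb⟩ := h
  apply hmin.2 (({x, y} : Set V)ᶜ) ?_ ?_ ?_ ?_ hind
  · refine ⟨Set.subset_univ _, fun hsub => ?_⟩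
    have : x ∈ ({x, y} : Set V)ᶜ := hsub (Set.mem_univ x)
    exact this (Or.inl rfl)
  · intro ha
    rcases ha with ha | ha
    · exact hxa ha.symm
    · exact hya ha.symm
  · intro hb
    rcases hb with hb | hb
    · exact hxb hb.symm
    · exact hyb hb.symm
  · have hpair : ({x, y} : Set V).ncard = 2 := Set.ncard_pair hxy
    have hc : ({x, y} : Set V).ncard + (({x, y} : Set V)ᶜ).ncard = Nat.card V :=
      Set.ncard_add_ncard_compl _
    have : Nat.card V = Fintype.card V := Nat.card_eq_fintype_card
    omega
end

section
/- Let G = (V,E) be a graph, X ⊆ V with |X| ≥ 4 and G[X] indecomposable. Then the sets Ext(X), ⟨X⟩, and X(u) for u ∈ X are pairwise disjoint and their union is V \ X. -/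
open SimpleGraph

variable {V : Type*}

section Helpers

variable {V : Type*}

private lemma ncard_le_two_of_subset_pair {X : Set V} {a b : V} (h : X ⊆ {a, b}) :
    X.ncard ≤ 2 := by
  have h1 := Set.ncard_le_ncard h (Set.toFinite {a, b})
  have h2 : ({a, b} : Set V).ncard ≤ 2 := by
    refine (Set.ncard_insert_le _ _).trans ?_
    simp [Set.ncard_singleton]
  omega

private lemma induce_adj' {s : Set V} (G : SimpleGraph V) (a b : s) :
    (G.induce s).Adj a b ↔ G.Adj (a : V) (b : V) := Iff.rfl

private lemma angle_decomp (G : SimpleGraph V) {X : Set V} (hX : 4 ≤ X.ncard)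
    {v : V} (hv : v ∈ AngleSet G X) :
    ¬ Indecomposable (G.induce (X ∪ {v})) := by
  obtain ⟨hvX, hadj⟩ := hv
  intro hind
  have hvmem : v ∈ X ∪ {v} := Set.mem_union_right _ rfl
  have hInt : IsInterval (G.induce (X ∪ {v})) {t : ↥(X ∪ {v}) | (t : V) ∈ X} := by
    intro x hx a ha b hb
    have hxv : (x : V) = v := by
      rcases x.2 with h | h
      · exact absurd h hx
      · exact h
    have haX : (a : V) ∈ X := ha
    have hbX : (b : V) ∈ X := hb
    show G.Adj (a : V) (x : V) ↔ G.Adj (b : V) (x : V)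
    rw [hxv]
    rcases hadj with h | h
    · exact iff_of_true (h _ haX).symm (h _ hbX).symm
    · exact iff_of_false (fun hc => h _ haX hc.symm) (fun hc => h _ hbX hc.symm)
  rcases hind _ hInt with h | h | ⟨t, ht⟩
  · obtain ⟨x0, hx0⟩ := Set.nonempty_of_ncard_ne_zero (by omega : X.ncard ≠ 0)
    have : (⟨x0, Set.mem_union_left _ hx0⟩ : ↥(X ∪ {v})) ∈
        {t : ↥(X ∪ {v}) | (t : V) ∈ X} := hx0
    rw [h] at this
    exact this
  · have : (⟨v, hvmem⟩ : ↥(X ∪ {v})) ∈ {t : ↥(X ∪ {v}) | (t : V) ∈ X} :=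
      h ▸ Set.mem_univ _
    exact hvX this
  · have hsub : X ⊆ {(t : V), (t : V)} := by
      intro x hx
      have hmem : (⟨x, Set.mem_union_left _ hx⟩ : ↥(X ∪ {v})) ∈
          {t : ↥(X ∪ {v}) | (t : V) ∈ X} := hx
      rw [ht] at hmem
      have := congrArg Subtype.val hmem
      simp at this
      simp [this]
    have := ncard_le_two_of_subset_pair hsub
    omega

private lemma xset_decomp (G : SimpleGraph V) {X : Set V} (hX : 4 ≤ X.ncard)
    {u v : V} (hu : u ∈ X) (hv : v ∈ XSet G X u) :
    ¬ Indecomposable (G.induce (X ∪ {v})) := by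
  obtain ⟨hvX, hInt⟩ := hv
  intro hind
  have hvmem : v ∈ X ∪ {v} := Set.mem_union_right _ rfl
  rcases hind _ hInt with h | h | ⟨t, ht⟩
  · have : (⟨v, hvmem⟩ : ↥(X ∪ {v})) ∈ (Subtype.val ⁻¹' {u, v} : Set ↥(X ∪ {v})) :=
      Or.inr rfl
    rw [h] at this
    exact this
  · have hsub : X ⊆ {u, v} := by
      intro x hx
      have : (⟨x, Set.mem_union_left _ hx⟩ : ↥(X ∪ {v})) ∈
          (Subtype.val ⁻¹' {u, v} : Set ↥(X ∪ {v})) := h ▸ Set.mem_univ _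
      exact this
    have := ncard_le_two_of_subset_pair hsub
    omega
  · have h1 : (⟨u, Set.mem_union_left _ hu⟩ : ↥(X ∪ {v})) ∈
        (Subtype.val ⁻¹' {u, v} : Set ↥(X ∪ {v})) := Or.inl rfl
    have h2 : (⟨v, hvmem⟩ : ↥(X ∪ {v})) ∈
        (Subtype.val ⁻¹' {u, v} : Set ↥(X ∪ {v})) := Or.inr rfl
    rw [ht] at h1 h2
    have : u = v := by
      have e1 := congrArg Subtype.val h1
      have e2 := congrArg Subtype.val h2
      simp at e1 e2
      exact e1.trans e2.symm
    exact hvX (this ▸ hu)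

private lemma angle_xset_false (G : SimpleGraph V) {X : Set V} (hX : 4 ≤ X.ncard)
    (hind : Indecomposable (G.induce X)) {u v : V} (hu : u ∈ X)
    (hv1 : v ∈ AngleSet G X) (hv2 : v ∈ XSet G X u) : False := by
  obtain ⟨hvX, hadj⟩ := hv1
  obtain ⟨-, hInt⟩ := hv2
  -- for every x ∈ X with x ≠ u, G.Adj u x ↔ G.Adj v x
  have key : ∀ x ∈ X, x ≠ u → (G.Adj u x ↔ G.Adj v x) := by
    intro x hx hxu
    have hxmem : x ∈ X ∪ {v} := Set.mem_union_left _ hx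
    have hxnot : (⟨x, hxmem⟩ : ↥(X ∪ {v})) ∉
        (Subtype.val ⁻¹' {u, v} : Set ↥(X ∪ {v})) := by
      rintro (h | h)
      · exact hxu h
      · exact hvX (h ▸ hx)
    exact hInt _ hxnot ⟨u, Set.mem_union_left _ hu⟩ (Or.inl rfl)
      ⟨v, Set.mem_union_right _ rfl⟩ (Or.inr rfl)
  -- X \ {u} is an interval of G.induce X
  have hJ : IsInterval (G.induce X) {y : ↥X | (y : V) ≠ u} := by
    intro x hx a ha b hb
    have hxu : (x : V) = u := not_not.mp hx
    show G.Adj (a : V) (x : V) ↔ G.Adj (b : V) (x : V)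
    rw [hxu]
    have ha' := (key _ a.2 ha).symm
    have hb' := (key _ b.2 hb).symm
    rcases hadj with h | h
    · exact iff_of_true ((ha'.mp (h _ a.2)).symm) ((hb'.mp (h _ b.2)).symm)
    · exact iff_of_false (fun hc => h _ a.2 (ha'.mpr hc.symm))
        (fun hc => h _ b.2 (hb'.mpr hc.symm))
  rcases hind _ hJ with h | h | ⟨t, ht⟩
  · -- X ⊆ {u}
    have hsub : X ⊆ {u, u} := by
      intro x hx
      by_contra hc
      have hxu : x ≠ u := by simpa using hc
      have : (⟨x, hx⟩ : ↥X) ∈ {y : ↥X | (y : V) ≠ u} := hxu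
      rw [h] at this; exact this
    have := ncard_le_two_of_subset_pair hsub
    omega
  · have : (⟨u, hu⟩ : ↥X) ∈ {y : ↥X | (y : V) ≠ u} := h ▸ Set.mem_univ _
    exact this rfl
  · -- X ⊆ {u, ↑t}
    have hsub : X ⊆ {u, (t : V)} := by
      intro x hx
      by_cases hxu : x = u
      · exact Or.inl hxu
      · have : (⟨x, hx⟩ : ↥X) ∈ {y : ↥X | (y : V) ≠ u} := hxu
        rw [ht] at this
        exact Or.inr (by simpa using congrArg Subtype.val this)
    have := ncard_le_two_of_subset_pair hsub
    omega

private lemma xset_xset_false (G : SimpleGraph V) {X : Set V} (hX : 4 ≤ X.ncard)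
    (hind : Indecomposable (G.induce X)) {u u' v : V} (hu : u ∈ X) (hu' : u' ∈ X)
    (huu' : u ≠ u') (hv1 : v ∈ XSet G X u) (hv2 : v ∈ XSet G X u') : False := by
  obtain ⟨hvX, hI1⟩ := hv1
  obtain ⟨-, hI2⟩ := hv2
  have key : ∀ x ∈ X, x ≠ u → x ≠ u' → (G.Adj u x ↔ G.Adj u' x) := by
    intro x hx hxu hxu'
    have hxmem : x ∈ X ∪ {v} := Set.mem_union_left _ hx
    have hxv : x ≠ v := fun h => hvX (h ▸ hx)
    have h1 := hI1 (⟨x, hxmem⟩ : ↥(X ∪ {v}))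
      (by rintro (h | h); exacts [hxu h, hxv h])
      ⟨u, Set.mem_union_left _ hu⟩ (Or.inl rfl)
      ⟨v, Set.mem_union_right _ rfl⟩ (Or.inr rfl)
    have h2 := hI2 (⟨x, hxmem⟩ : ↥(X ∪ {v}))
      (by rintro (h | h); exacts [hxu' h, hxv h])
      ⟨u', Set.mem_union_left _ hu'⟩ (Or.inl rfl)
      ⟨v, Set.mem_union_right _ rfl⟩ (Or.inr rfl)
    exact h1.trans h2.symm
  have hJ : IsInterval (G.induce X) {y : ↥X | (y : V) = u ∨ (y : V) = u'} := by
    intro x hx a ha b hb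
    simp only [Set.mem_setOf_eq, not_or] at hx
    have key' : ∀ w : ↥X, ((w : V) = u ∨ (w : V) = u') →
        (G.Adj (w : V) (x : V) ↔ G.Adj u (x : V)) := by
      rintro w (h | h)
      · rw [h]
      · rw [h]; exact (key _ x.2 hx.1 hx.2).symm
    show G.Adj (a : V) (x : V) ↔ G.Adj (b : V) (x : V)
    exact (key' a ha).trans (key' b hb).symm
  rcases hind _ hJ with h | h | ⟨t, ht⟩
  · have : (⟨u, hu⟩ : ↥X) ∈ {y : ↥X | (y : V) = u ∨ (y : V) = u'} := Or.inl rfl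
    rw [h] at this; exact this
  · have hsub : X ⊆ {u, u'} := by
      intro x hx
      have : (⟨x, hx⟩ : ↥X) ∈ {y : ↥X | (y : V) = u ∨ (y : V) = u'} :=
        h ▸ Set.mem_univ _
      exact this
    have := ncard_le_two_of_subset_pair hsub
    omega
  · have h1 : (⟨u, hu⟩ : ↥X) ∈ {y : ↥X | (y : V) = u ∨ (y : V) = u'} := Or.inl rfl
    have h2 : (⟨u', hu'⟩ : ↥X) ∈ {y : ↥X | (y : V) = u ∨ (y : V) = u'} := Or.inr rfl
    rw [ht] at h1 h2
    exact huu' (by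
      have e1 := congrArg Subtype.val h1
      have e2 := congrArg Subtype.val h2
      simp at e1 e2
      rw [e1, e2])

private lemma ext_of_not_angle_xset (G : SimpleGraph V) {X : Set V} (hX : 4 ≤ X.ncard)
    (hind : Indecomposable (G.induce X)) {v : V} (hvX : v ∉ X)
    (hA : v ∉ AngleSet G X) (hU : ∀ u ∈ X, v ∉ XSet G X u) :
    Indecomposable (G.induce (X ∪ {v})) := by
  intro I hI
  have hvmem : v ∈ X ∪ {v} := Set.mem_union_right _ rfl
  set vv : ↥(X ∪ {v}) := ⟨v, hvmem⟩ with hvv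
  have hmemX : ∀ t : ↥(X ∪ {v}), (t : V) ≠ v → (t : V) ∈ X := by
    intro t ht
    rcases t.2 with h | h
    · exact h
    · exact absurd h ht
  set J : Set ↥X := {y : ↥X | (⟨(y : V), Set.mem_union_left _ y.2⟩ : ↥(X ∪ {v})) ∈ I}
    with hJdef
  have hJint : IsInterval (G.induce X) J := by
    intro y hy a ha b hb
    exact hI (⟨(y : V), Set.mem_union_left _ y.2⟩ : ↥(X ∪ {v})) hy
      (⟨(a : V), Set.mem_union_left _ a.2⟩ : ↥(X ∪ {v})) ha
      (⟨(b : V), Set.mem_union_left _ b.2⟩ : ↥(X ∪ {v})) hb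
  rcases hind _ hJint with hJ | hJ | ⟨y0, hJ⟩
  · -- J empty
    by_cases hvI : vv ∈ I
    · -- I = {vv}
      right; right
      refine ⟨vv, ?_⟩
      ext t
      simp only [Set.mem_singleton_iff]
      constructor
      · intro htI
        by_cases htv : (t : V) = v
        · exact Subtype.ext htv
        · exfalso
          have hy : (⟨(t : V), hmemX t htv⟩ : ↥X) ∈ J := by
            have : (⟨(t : V), Set.mem_union_left _ (hmemX t htv)⟩ : ↥(X ∪ {v})) = t :=
              Subtype.ext rfl
            simpa [hJdef, this] using htI
          rw [hJ] at hy; exact hy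
      · rintro rfl; exact hvI
    · -- I = ∅
      left
      ext t
      simp only [Set.mem_empty_iff_false, iff_false]
      intro htI
      by_cases htv : (t : V) = v
      · exact hvI (by rwa [show vv = t from Subtype.ext htv.symm])
      · have hy : (⟨(t : V), hmemX t htv⟩ : ↥X) ∈ J := by
          have : (⟨(t : V), Set.mem_union_left _ (hmemX t htv)⟩ : ↥(X ∪ {v})) = t :=
            Subtype.ext rfl
          simpa [hJdef, this] using htI
        rw [hJ] at hy; exact hy
  · -- J = univ
    by_cases hvI : vv ∈ I
    · -- I = univ
      right; left
      ext t
      simp only [Set.mem_univ, iff_true]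
      by_cases htv : (t : V) = v
      · rwa [show t = vv from Subtype.ext htv]
      · have hy : (⟨(t : V), hmemX t htv⟩ : ↥X) ∈ J := hJ ▸ Set.mem_univ _
        have hy' : (⟨(t : V), Set.mem_union_left _ (hmemX t htv)⟩ : ↥(X ∪ {v})) ∈ I := hy
        have heq : (⟨(t : V), Set.mem_union_left _ (hmemX t htv)⟩ : ↥(X ∪ {v})) = t :=
          Subtype.ext rfl
        rwa [heq] at hy'
    · -- v ∈ AngleSet, contradiction
      exfalso
      apply hA
      refine ⟨hvX, ?_⟩
      obtain ⟨x0, hx0⟩ := Set.nonempty_of_ncard_ne_zero (by omega : X.ncard ≠ 0)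
      have hmem : ∀ x (hx : x ∈ X), (⟨x, Set.mem_union_left _ hx⟩ : ↥(X ∪ {v})) ∈ I := by
        intro x hx
        have : (⟨x, hx⟩ : ↥X) ∈ J := hJ ▸ Set.mem_univ _
        exact this
      have keyadj : ∀ x ∈ X, (G.Adj x v ↔ G.Adj x0 v) := by
        intro x hx
        exact hI vv hvI _ (hmem x hx) _ (hmem x0 hx0)
      by_cases h0 : G.Adj v x0
      · left
        intro x hx
        exact ((keyadj x hx).mpr h0.symm).symm
      · right
        intro x hx hc
        exact h0 (((keyadj x hx).mp hc.symm).symm)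
  · -- J = {y0}
    by_cases hvI : vv ∈ I
    · -- v ∈ XSet at ↑y0, contradiction
      exfalso
      apply hU (y0 : V) y0.2
      refine ⟨hvX, ?_⟩
      have hIeq : (Subtype.val ⁻¹' {(y0 : V), v} : Set ↥(X ∪ {v})) = I := by
        ext t
        constructor
        · rintro (h | h)
          · have : t = ⟨(y0 : V), Set.mem_union_left _ y0.2⟩ := Subtype.ext h
            rw [this]
            have : (⟨(y0 : V), y0.2⟩ : ↥X) ∈ J := by rw [hJ]; rfl
            exact this
          · rwa [show t = vv from Subtype.ext h]
        · intro htI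
          by_cases htv : (t : V) = v
          · exact Or.inr htv
          · left
            have hy : (⟨(t : V), hmemX t htv⟩ : ↥X) ∈ J := by
              have heq : (⟨(t : V), Set.mem_union_left _ (hmemX t htv)⟩ : ↥(X ∪ {v})) = t :=
                Subtype.ext rfl
              simpa [hJdef, heq] using htI
            rw [hJ] at hy
            have hy2 : (⟨(t : V), hmemX t htv⟩ : ↥X) = y0 := hy
            exact congrArg Subtype.val hy2
      rw [hIeq]
      exact hI
    · -- I = {embed y0}
      right; right
      refine ⟨⟨(y0 : V), Set.mem_union_left _ y0.2⟩, ?_⟩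
      ext t
      simp only [Set.mem_singleton_iff]
      constructor
      · intro htI
        by_cases htv : (t : V) = v
        · exact absurd (by rwa [show vv = t from Subtype.ext htv.symm]) hvI
        · have hy : (⟨(t : V), hmemX t htv⟩ : ↥X) ∈ J := by
            have heq : (⟨(t : V), Set.mem_union_left _ (hmemX t htv)⟩ : ↥(X ∪ {v})) = t :=
              Subtype.ext rfl
            simpa [hJdef, heq] using htI
          rw [hJ] at hy
          have hy2 : (⟨(t : V), hmemX t htv⟩ : ↥X) = y0 := hy
          have e : (t : V) = (y0 : V) := congrArg Subtype.val hy2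
          exact Subtype.ext e
      · rintro rfl
        have : (⟨(y0 : V), y0.2⟩ : ↥X) ∈ J := by rw [hJ]; rfl
        exact this

end Helpers


theorem partition_pX {V : Type*} [Fintype V] (G : SimpleGraph V) (X : Set V)
    (hX : 4 ≤ X.ncard) (hind : Indecomposable (G.induce X)) :
    Disjoint (ExtSet G X) (AngleSet G X) ∧
    (∀ u ∈ X, Disjoint (ExtSet G X) (XSet G X u)) ∧
    (∀ u ∈ X, Disjoint (AngleSet G X) (XSet G X u)) ∧
    (∀ u ∈ X, ∀ u' ∈ X, u ≠ u' → Disjoint (XSet G X u) (XSet G X u')) ∧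
    ExtSet G X ∪ AngleSet G X ∪ (⋃ u ∈ X, XSet G X u) = Set.univ \ X := by
  classical
  refine ⟨?_, ?_, ?_, ?_, ?_⟩
  · rw [Set.disjoint_left]
    rintro v hv hva
    exact angle_decomp G hX hva hv.2
  · intro u hu
    rw [Set.disjoint_left]
    rintro v hv hvx
    exact xset_decomp G hX hu hvx hv.2
  · intro u hu
    rw [Set.disjoint_left]
    rintro v hv hvx
    exact angle_xset_false G hX hind hu hv hvx
  · intro u hu u' hu' huu'
    rw [Set.disjoint_left]
    rintro v hv hvx
    exact xset_xset_false G hX hind hu hu' huu' hv hvx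
  · ext v
    simp only [Set.mem_union, Set.mem_iUnion, Set.mem_diff, Set.mem_univ, true_and]
    constructor
    · rintro ((h | h) | ⟨u, hu, h⟩)
      · exact h.1
      · exact h.1
      · exact h.1
    · intro hvX
      by_cases hA : v ∈ AngleSet G X
      · exact Or.inl (Or.inr hA)
      · by_cases hU : ∃ u ∈ X, v ∈ XSet G X u
        · obtain ⟨u, hu, h⟩ := hU
          exact Or.inr ⟨u, hu, h⟩
        · push_neg at hU
          exact Or.inl (Or.inl ⟨hvX, ext_of_not_angle_xset G hX hind hvX hA hU⟩)
end

section
/- Let G = (V,E) be a graph and X ⊆ V with |X| ≥ 4 and G[X] indecomposable. If u ∈ X, v ∈ X(u), and w ∈ V \ (X ∪ X(u)), and G[X ∪ {v,w}] is decomposable, then {u,v} is an interval of G[X ∪ {v,w}]. -/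
open SimpleGraph

variable {V : Type*}

def IntvOn (G : SimpleGraph V) (S I : Set V) : Prop :=
  ∀ x ∈ S \ I, ∀ a ∈ I, ∀ b ∈ I, (G.Adj a x ↔ G.Adj b x)

lemma intv_pair {G : SimpleGraph V} {S : Set V} {a b : V} (ha : a ∈ S) (hb : b ∈ S) :
    IsInterval (G.induce S) (Subtype.val ⁻¹' {a, b}) ↔
      ∀ x ∈ S, x ≠ a → x ≠ b → (G.Adj a x ↔ G.Adj b x) := by
  constructor
  · intro h x hx hxa hxb
    have := h ⟨x, hx⟩ (by simp [hxa, hxb]) ⟨a, ha⟩ (by simp) ⟨b, hb⟩ (by simp)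
    simpa [G.adj_comm] using this
  · intro h x hxm p hp q hq
    simp only [Set.mem_preimage, Set.mem_insert_iff, Set.mem_singleton_iff] at hxm hp hq
    push_neg at hxm
    have hkey : G.Adj a (x : V) ↔ G.Adj b (x : V) := h x x.2 hxm.1 hxm.2
    show G.Adj (p : V) (x : V) ↔ G.Adj (q : V) (x : V)
    rcases hp with hp | hp <;> rcases hq with hq | hq <;> rw [hp, hq]
    · exact hkey
    · exact hkey.symm

lemma dec_transfer {G : SimpleGraph V} {S : Set V} (h : Decomposable (G.induce S)) :
    ∃ J, J ⊆ S ∧ IntvOn G S J ∧ J ≠ ∅ ∧ J ≠ S ∧ ∀ x, J ≠ {x} := by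
  unfold Decomposable Indecomposable at h
  push_neg at h
  obtain ⟨I, hI, h0, h1, h2⟩ := h
  refine ⟨Subtype.val '' I, ?_, ?_, ?_, ?_, ?_⟩
  · rintro y ⟨p, _, rfl⟩; exact p.2
  · rintro x ⟨hxS, hxJ⟩ a ⟨p, hp, rfl⟩ b ⟨q, hq, rfl⟩
    have hx : (⟨x, hxS⟩ : ↥S) ∉ I := fun hc => hxJ ⟨_, hc, rfl⟩
    exact hI ⟨x, hxS⟩ hx p hp q hq
  · intro hc
    obtain ⟨p, hp⟩ := h0
    have : (p : V) ∈ Subtype.val '' I := ⟨p, hp, rfl⟩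
    rw [hc] at this
    exact this
  · intro hc
    apply h1
    ext p
    simp only [Set.mem_univ, iff_true]
    have : (p : V) ∈ Subtype.val '' I := by rw [hc]; exact p.2
    obtain ⟨q, hq, hqe⟩ := this
    rwa [Subtype.val_injective hqe] at hq
  · intro x hc
    have hxS : x ∈ S := by
      have : x ∈ Subtype.val '' I := by rw [hc]; rfl
      obtain ⟨p, _, rfl⟩ := this; exact p.2
    apply h2 ⟨x, hxS⟩
    ext p
    simp only [Set.mem_singleton_iff]
    constructor
    · intro hp
      have : (p : V) ∈ Subtype.val '' I := ⟨p, hp, rfl⟩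
      rw [hc] at this
      exact Subtype.val_injective this
    · rintro rfl
      have : x ∈ Subtype.val '' I := by rw [hc]; rfl
      obtain ⟨q, hq, hqe⟩ := this
      rwa [show q = (⟨x, hxS⟩ : ↥S) from Subtype.val_injective hqe] at hq

lemma indec_transfer {G : SimpleGraph V} {S : Set V} (h : Indecomposable (G.induce S)) :
    ∀ J ⊆ S, IntvOn G S J → J = ∅ ∨ J = S ∨ ∃ x, J = {x} := by
  intro J hJS hJ
  have hint : IsInterval (G.induce S) {p : ↥S | (p : V) ∈ J} := by
    intro x hx p hp q hq
    exact hJ x ⟨x.2, hx⟩ p hp q hq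
  rcases h _ hint with h0 | h1 | ⟨x, hx⟩
  · left
    ext y
    simp only [Set.mem_empty_iff_false, iff_false]
    intro hy
    have : (⟨y, hJS hy⟩ : ↥S) ∈ {p : ↥S | (p : V) ∈ J} := hy
    rw [h0] at this
    exact this
  · right; left
    refine Set.Subset.antisymm hJS (fun y hy => ?_)
    have : (⟨y, hy⟩ : ↥S) ∈ {p : ↥S | (p : V) ∈ J} := by rw [h1]; trivial
    exact this
  · right; right
    refine ⟨x, ?_⟩
    ext y
    simp only [Set.mem_singleton_iff]
    constructor
    · intro hy
      have : (⟨y, hJS hy⟩ : ↥S) ∈ {p : ↥S | (p : V) ∈ J} := hy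
      rw [hx] at this
      exact congrArg Subtype.val this
    · rintro rfl
      have : x ∈ ({x} : Set ↥S) := rfl
      rw [← hx] at this
      exact this

lemma classify {G : SimpleGraph V} {X : Set V} {u v : V}
    (hX : 4 ≤ X.ncard) (hind : Indecomposable (G.induce X))
    (hu : u ∈ X) (hvX : v ∉ X)
    (hint : ∀ y ∈ X, y ≠ u → (G.Adj u y ↔ G.Adj v y)) :
    ∀ J ⊆ X ∪ {v}, IntvOn G (X ∪ {v}) J →
      J = ∅ ∨ J = X ∪ {v} ∨ (∃ x, J = {x}) ∨ J = {u, v} := by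
  intro J hJS hJ
  have hKint : IntvOn G X (J ∩ X) := by
    intro x hx a ha b hb
    exact hJ x ⟨Or.inl hx.1, fun h => hx.2 ⟨h, hx.1⟩⟩ a ha.1 b hb.1
  rcases indec_transfer hind (J ∩ X) Set.inter_subset_right hKint with h0 | h1 | ⟨x, hx⟩
  · -- J ∩ X = ∅, so J ⊆ {v}
    have hsub : J ⊆ {v} := by
      intro y hy
      rcases hJS hy with hyX | hyv
      · exact absurd (h0 ▸ (⟨hy, hyX⟩ : y ∈ J ∩ X)) (Set.notMem_empty y)
      · exact hyv
    rcases Set.subset_singleton_iff_eq.mp hsub with h | h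
    · exact Or.inl h
    · exact Or.inr (Or.inr (Or.inl ⟨v, h⟩))
  · -- J ∩ X = X, so X ⊆ J
    have hXJ : X ⊆ J := by
      intro y hy
      rw [← h1] at hy
      exact hy.1
    by_cases hvJ : v ∈ J
    · refine Or.inr (Or.inl (Set.Subset.antisymm hJS ?_))
      rintro y (hy | hy)
      · exact hXJ hy
      · rwa [hy]
    · exfalso
      have hcon : ∀ a ∈ X, (G.Adj a v ↔ G.Adj u v) :=
        fun a ha => hJ v ⟨Or.inr rfl, hvJ⟩ a (hXJ ha) u (hXJ hu)
      have hK' : IntvOn G X (X \ {u}) := by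
        intro y hy a ha b hb
        have hyu : y = u := by
          by_contra h
          exact hy.2 ⟨hy.1, h⟩
        rw [hyu]
        have hane : a ≠ u := ha.2
        have hbne : b ≠ u := hb.2
        have ca : G.Adj a u ↔ G.Adj u v := by
          rw [G.adj_comm a u, hint a ha.1 hane, G.adj_comm v a]
          exact hcon a ha.1
        have cb : G.Adj b u ↔ G.Adj u v := by
          rw [G.adj_comm b u, hint b hb.1 hbne, G.adj_comm v b]
          exact hcon b hb.1
        exact ca.trans cb.symm
      rcases indec_transfer hind (X \ {u}) Set.diff_subset hK' with h0' | h1' | ⟨x, hx'⟩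
      · have : X ⊆ {u} := by
          intro y hy
          by_contra h
          exact absurd (h0' ▸ (⟨hy, h⟩ : y ∈ X \ {u})) (Set.notMem_empty y)
        have := Set.ncard_le_ncard this (Set.finite_singleton u)
        simp [Set.ncard_singleton] at this
        omega
      · have : u ∈ X \ {u} := by rw [h1']; exact hu
        exact this.2 rfl
      · have hsub : X ⊆ insert u {x} := by
          intro y hy
          by_cases h : y = u
          · exact Or.inl h
          · exact Or.inr (hx' ▸ (⟨hy, h⟩ : y ∈ X \ {u}))
        have h2 := Set.ncard_le_ncard hsub (Set.Finite.insert u (Set.finite_singleton x))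
        have h3 := Set.ncard_insert_le u ({x} : Set V)
        simp [Set.ncard_singleton] at h3
        omega
  · -- J ∩ X = {x}
    have hxm : x ∈ J ∩ X := by rw [hx]; rfl
    have hxJ : x ∈ J := hxm.1
    have hxX : x ∈ X := hxm.2
    have hJsub : J ⊆ {x, v} := by
      intro y hy
      rcases hJS hy with hyX | hyv
      · have hm : y ∈ J ∩ X := ⟨hy, hyX⟩
        rw [hx] at hm
        exact Or.inl hm
      · exact Or.inr hyv
    by_cases hvJ : v ∈ J
    · by_cases hxu : x = u
      · subst hxu
        refine Or.inr (Or.inr (Or.inr (Set.Subset.antisymm hJsub ?_)))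
        rintro y (rfl | rfl)
        · exact hxJ
        · exact hvJ
      · exfalso
        have hpair : IntvOn G X {x, u} := by
          intro y hy a ha b hb
          have hyX : y ∈ X := hy.1
          have hyx : y ≠ x := fun h => hy.2 (Or.inl h)
          have hyu : y ≠ u := fun h => hy.2 (Or.inr h)
          have hyJ : y ∉ J := by
            intro h
            have hm : y ∈ J ∩ X := ⟨h, hyX⟩
            rw [hx] at hm
            exact hyx hm
          have c1 : G.Adj x y ↔ G.Adj v y := hJ y ⟨Or.inl hyX, hyJ⟩ x hxJ v hvJ
          have c2 : G.Adj u y ↔ G.Adj v y := hint y hyX hyu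
          have key : ∀ c ∈ ({x, u} : Set V), (G.Adj c y ↔ G.Adj v y) := by
            rintro c (rfl | rfl)
            · exact c1
            · exact c2
          exact (key a ha).trans (key b hb).symm
        have hpsub : ({x, u} : Set V) ⊆ X := by
          rintro y (rfl | rfl)
          · exact hxX
          · exact hu
        rcases indec_transfer hind {x, u} hpsub hpair with h0' | h1' | ⟨z, hz⟩
        · exact absurd (h0' ▸ (Or.inl rfl : x ∈ ({x, u} : Set V))) (Set.notMem_empty x)
        · have h2 := Set.ncard_insert_le x ({u} : Set V)
          rw [h1'] at h2
          simp [Set.ncard_singleton] at h2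
          omega
        · have e1 : x ∈ ({z} : Set V) := by rw [← hz]; exact Or.inl rfl
          have e2 : u ∈ ({z} : Set V) := by rw [← hz]; exact Or.inr rfl
          exact hxu (e1.trans e2.symm)
    · refine Or.inr (Or.inr (Or.inl ⟨x, Set.Subset.antisymm ?_ ?_⟩))
      · intro y hy
        rcases hJsub hy with h | h
        · exact h
        · exact absurd (h ▸ hy) hvJ
      · rintro y rfl
        exact hxJ

theorem interval_of_XSet' {V : Type*} [Fintype V] (G : SimpleGraph V) (X : Set V)
    (hX : 4 ≤ X.ncard) (hind : Indecomposable (G.induce X))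
    (u v w : V)
    (hu : u ∈ X)
    (hvX : v ∉ X) (hvI : IsInterval (G.induce (X ∪ {v})) (Subtype.val ⁻¹' ({u, v} : Set V)))
    (hwX : w ∉ X)
    (hwU : ¬ (w ∉ X ∧ IsInterval (G.induce (X ∪ {w})) (Subtype.val ⁻¹' ({u, w} : Set V))))
    (hdec : Decomposable (G.induce (X ∪ {v, w}))) :
    IsInterval (G.induce (X ∪ {v, w})) (Subtype.val ⁻¹' {u, v}) := by
  have huv : u ≠ v := fun h => hvX (h ▸ hu)
  have huw : u ≠ w := fun h => hwX (h ▸ hu)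
  have hwv : w ≠ v := by
    intro h
    exact hwU ⟨hwX, h ▸ hvI⟩
  have hint : ∀ y ∈ X, y ≠ u → (G.Adj u y ↔ G.Adj v y) := by
    intro y hy hyu
    exact (intv_pair (G := G) (S := X ∪ {v}) (a := u) (b := v) (Or.inl hu) (Or.inr rfl)).mp
      hvI y (Or.inl hy) hyu (fun h => hvX (h ▸ hy))
  have hmk : (∀ y ∈ X, y ≠ u → (G.Adj u y ↔ G.Adj w y)) → False := by
    intro h
    refine hwU ⟨hwX,
      (intv_pair (G := G) (S := X ∪ {w}) (a := u) (b := w) (Or.inl hu) (Or.inr rfl)).mpr ?_⟩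
    intro y hy hyu hyw
    rcases hy with hyX | hyw'
    · exact h y hyX hyu
    · exact absurd hyw' hyw
  have hvS2 : v ∈ X ∪ {v, w} := Or.inr (Or.inl rfl)
  have hwS2 : w ∈ X ∪ {v, w} := Or.inr (Or.inr rfl)
  suffices key : G.Adj u w ↔ G.Adj v w by
    refine (intv_pair (G := G) (S := X ∪ {v, w}) (a := u) (b := v) (Or.inl hu) hvS2).mpr ?_
    intro y hy hyu hyv
    rcases hy with hyX | hy'
    · exact hint y hyX hyu
    · rcases hy' with rfl | rfl
      · exact absurd rfl hyv
      · exact key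
  obtain ⟨I, hIS, hIint, hIne, hInS, hIns⟩ := dec_transfer hdec
  have hS1sub : X ∪ {v} ⊆ X ∪ {v, w} := by
    rintro y (hy | hy)
    · exact Or.inl hy
    · exact Or.inr (Or.inl hy)
  have hJint : IntvOn G (X ∪ {v}) (I ∩ (X ∪ {v})) := by
    intro x hx a ha b hb
    refine hIint x ⟨hS1sub hx.1, fun h => hx.2 ⟨h, hx.1⟩⟩ a ha.1 b hb.1
  rcases classify hX hind hu hvX hint _ Set.inter_subset_right hJint with h0 | h1 | ⟨x, hx⟩ | hp
  · -- I ∩ (X ∪ {v}) = ∅ : then I ⊆ {w}, contradiction with nontriviality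
    exfalso
    have hsub : I ⊆ {w} := by
      intro y hy
      have hnS1 : y ∉ X ∪ {v} := by
        intro hc
        exact absurd (h0 ▸ (⟨hy, hc⟩ : y ∈ I ∩ (X ∪ {v}))) (Set.notMem_empty y)
      rcases hIS hy with hyX | hy'
      · exact absurd (Or.inl hyX) hnS1
      · rcases hy' with h' | h'
        · exact absurd (Or.inr h') hnS1
        · exact h'
    rcases Set.subset_singleton_iff_eq.mp hsub with h | h
    · exact hIne h
    · exact hIns w h
  · -- I ∩ (X ∪ {v}) = X ∪ {v}
    have hS1I : X ∪ {v} ⊆ I := by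
      intro y hy
      rw [← h1] at hy
      exact hy.1
    have hwI : w ∉ I := by
      intro hwI
      apply hInS
      refine Set.Subset.antisymm hIS ?_
      rintro y (hy | hy)
      · exact hS1I (Or.inl hy)
      · rcases hy with h' | h'
        · exact hS1I (Or.inr h')
        · rw [show y = w from h']
          exact hwI
    exact hIint w ⟨hwS2, hwI⟩ u (hS1I (Or.inl hu)) v (hS1I (Or.inr rfl))
  · -- I ∩ (X ∪ {v}) = {x}
    have hxm : x ∈ I ∩ (X ∪ {v}) := by rw [hx]; rfl
    have hxI : x ∈ I := hxm.1
    have hxS1 : x ∈ X ∪ {v} := hxm.2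
    have hIsub : I ⊆ {x, w} := by
      intro y hy
      rcases hIS hy with hyX | hy'
      · have hm : y ∈ I ∩ (X ∪ {v}) := ⟨hy, Or.inl hyX⟩
        rw [hx] at hm
        exact Or.inl hm
      · rcases hy' with h' | h'
        · have hm : y ∈ I ∩ (X ∪ {v}) := ⟨hy, Or.inr h'⟩
          rw [hx] at hm
          exact Or.inl hm
        · exact Or.inr h'
    by_cases hwI : w ∈ I
    · rcases hxS1 with hxX | hxv
      · by_cases hxu : x = u
        · -- I ⊇ {u, w} : w ∈ X(u), contradiction
          subst hxu
          exfalso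
          apply hmk
          intro y hyX hyu
          have hyI : y ∉ I := by
            intro h
            rcases hIsub h with h' | h'
            · exact hyu h'
            · exact hwX (h' ▸ hyX)
          exact hIint y ⟨Or.inl hyX, hyI⟩ x hxI w hwI
        · -- x ∈ X, x ≠ u : conclusion holds by a chain
          have huI : u ∉ I := by
            intro h
            rcases hIsub h with h' | h'
            · exact hxu h'.symm
            · exact huw h'
          have hvI' : v ∉ I := by
            intro h
            rcases hIsub h with h' | h'
            · exact hvX (h' ▸ hxX)
            · exact hwv h'.symm
          have c1 : G.Adj x u ↔ G.Adj w u := hIint u ⟨Or.inl hu, huI⟩ x hxI w hwI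
          have c2 : G.Adj x v ↔ G.Adj w v := hIint v ⟨hvS2, hvI'⟩ x hxI w hwI
          have c3 : G.Adj u x ↔ G.Adj v x := hint x hxX hxu
          rw [G.adj_comm u w, ← c1, G.adj_comm v w, ← c2, G.adj_comm x u, G.adj_comm x v]
          exact c3
      · -- x = v : I ⊇ {v, w} : w ∈ X(u), contradiction
        exfalso
        have hxv' : x = v := hxv
        apply hmk
        intro y hyX hyu
        have hyI : y ∉ I := by
          intro h
          rcases hIsub h with h' | h'
          · exact hvX ((h'.trans hxv') ▸ hyX)
          · exact hwX (h' ▸ hyX)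
        have c1 : G.Adj x y ↔ G.Adj w y := hIint y ⟨Or.inl hyX, hyI⟩ x hxI w hwI
        have c0 : G.Adj u y ↔ G.Adj x y := by
          rw [hxv']
          exact hint y hyX hyu
        exact c0.trans c1
    · -- w ∉ I : I ⊆ {x}, contradiction with nontriviality
      exfalso
      have : I ⊆ {x} := by
        intro y hy
        rcases hIsub hy with h | h
        · exact h
        · exact absurd (h ▸ hy) hwI
      rcases Set.subset_singleton_iff_eq.mp this with h | h
      · exact hIne h
      · exact hIns x h
  · -- I ∩ (X ∪ {v}) = {u, v}
    have huI : u ∈ I := by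
      have : u ∈ I ∩ (X ∪ {v}) := by rw [hp]; exact Or.inl rfl
      exact this.1
    have hvI' : v ∈ I := by
      have : v ∈ I ∩ (X ∪ {v}) := by rw [hp]; exact Or.inr rfl
      exact this.1
    by_cases hwI : w ∈ I
    · exfalso
      apply hmk
      intro y hyX hyu
      have hyI : y ∉ I := by
        intro h
        have hm : y ∈ I ∩ (X ∪ {v}) := ⟨h, Or.inl hyX⟩
        rw [hp] at hm
        rcases hm with h' | h'
        · exact hyu h'
        · exact hvX (h' ▸ hyX)
      exact hIint y ⟨Or.inl hyX, hyI⟩ u huI w hwI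
    · exact hIint w ⟨hwS2, hwI⟩ u huI v hvI'

theorem interval_of_XSet {V : Type*} [Fintype V] (G : SimpleGraph V) (X : Set V)
    (hX : 4 ≤ X.ncard) (hind : Indecomposable (G.induce X))
    (u v w : V) (hu : u ∈ X) (hv : v ∈ XSet G X u) (hw : w ∉ X ∪ XSet G X u)
    (hdec : Decomposable (G.induce (X ∪ {v, w}))) :
    IsInterval (G.induce (X ∪ {v, w})) (Subtype.val ⁻¹' {u, v}) := by
  obtain ⟨hvX, hvI⟩ := hv
  have hwX : w ∉ X := fun h => hw (Or.inl h)
  have hwU : ¬ (w ∉ X ∧ IsInterval (G.induce (X ∪ {w})) (Subtype.val ⁻¹' ({u, w} : Set V))) :=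
    fun h => hw (Or.inr h)
  exact interval_of_XSet' G X hX hind u v w hu hvX hvI hwX hwU hdec
end

section
/- Let G = (V,E) be a graph and X ⊆ V with |X| ≥ 4 and G[X] indecomposable. If v ∈ ⟨X⟩ and w ∈ V \ (X ∪ ⟨X⟩), and G[X ∪ {v,w}] is decomposable, then X ∪ {w} is an interval of G[X ∪ {v,w}]. -/
open SimpleGraph

variable {V : Type*}

theorem interval_of_angle {V : Type*} [Fintype V] (G : SimpleGraph V) (X : Set V)
    (hX : 4 ≤ X.ncard) (hind : Indecomposable (G.induce X))
    (v w : V) (hv : v ∈ AngleSet G X) (hw : w ∉ X ∪ AngleSet G X)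
    (hdec : Decomposable (G.induce (X ∪ {v, w}))) :
    IsInterval (G.induce (X ∪ {v, w})) (Subtype.val ⁻¹' (X ∪ {w})) := by
  classical
  obtain ⟨hvX, hv2⟩ := hv
  have hwX : w ∉ X := fun h => hw (Or.inl h)
  have hwA : w ∉ AngleSet G X := fun h => hw (Or.inr h)
  have hmix : ¬ ((∀ x ∈ X, G.Adj w x) ∨ (∀ x ∈ X, ¬ G.Adj w x)) := fun h => hwA ⟨hwX, h⟩
  push_neg at hmix
  obtain ⟨⟨x₂, hx₂X, hx₂⟩, ⟨x₁, hx₁X, hx₁⟩⟩ := hmix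
  -- hx₂ : ¬ G.Adj w x₂, hx₁ : G.Adj w x₁
  have huv : ∀ x ∈ X, ∀ y ∈ X, (G.Adj v x ↔ G.Adj v y) := by
    rcases hv2 with h | h
    · exact fun x hx y hy => iff_of_true (h x hx) (h y hy)
    · exact fun x hx y hy => iff_of_false (h x hx) (h y hy)
  set Y : Set V := X ∪ {v, w} with hY
  unfold Decomposable Indecomposable at hdec
  push_neg at hdec
  obtain ⟨I, hI, hIne, hIuniv, hIsing⟩ := hdec
  have memv : v ∈ Y := Or.inr (Or.inl rfl)
  have memw : w ∈ Y := Or.inr (Or.inr rfl)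
  set vY : ↥Y := ⟨v, memv⟩ with hvY
  set wY : ↥Y := ⟨w, memw⟩ with hwY
  have lift : ∀ x ∈ X, ↥Y := fun x hx => ⟨x, Or.inl hx⟩
  -- the trace of I on X
  set J : Set ↥X := {y | (⟨(y : V), Or.inl y.2⟩ : ↥Y) ∈ I} with hJdef
  have hJint : IsInterval (G.induce X) J := by
    intro y hy a ha b hb
    exact hI ⟨(y : V), Or.inl y.2⟩ hy ⟨(a : V), Or.inl a.2⟩ ha ⟨(b : V), Or.inl b.2⟩ hb
  have classify : ∀ z : ↥Y, z ∈ I → ((z : V) ∈ X → False) → z = vY ∨ z = wY := by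
    intro z hz hzX
    rcases z.2 with h | h | h
    · exact absurd h hzX
    · exact Or.inl (Subtype.ext h)
    · exact Or.inr (Subtype.ext h)
  -- the key claim
  have key : ∀ x ∈ X, (G.Adj v w ↔ G.Adj v x) := by
    rcases hind J hJint with hJ | hJ | ⟨x₀s, hJ⟩
    · -- J = ∅ : I = {vY, wY}, contradiction
      exfalso
      obtain ⟨a, ha⟩ := hIne
      have hb : ∃ b ∈ I, b ≠ a := by
        by_contra hcon
        push_neg at hcon
        exact hIsing a (Set.eq_singleton_iff_unique_mem.mpr ⟨ha, hcon⟩)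
      obtain ⟨b, hb, hba⟩ := hb
      have hnotX : ∀ z : ↥Y, z ∈ I → (z : V) ∈ X → False := by
        intro z hz hzX
        have : (⟨(z : V), Or.inl hzX⟩ : ↥Y) ∈ I := by
          convert hz using 2
        have : (⟨(z : V), hzX⟩ : ↥X) ∈ J := this
        rw [hJ] at this
        exact this
      have ha' := classify a ha (hnotX a ha)
      have hb' := classify b hb (hnotX b hb)
      have hvwI : vY ∈ I ∧ wY ∈ I := by
        rcases ha' with h1 | h1 <;> rcases hb' with h2 | h2
        · exact absurd (h1.trans h2.symm).symm hba
        · exact ⟨h1 ▸ ha, h2 ▸ hb⟩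
        · exact ⟨h2 ▸ hb, h1 ▸ ha⟩
        · exact absurd (h1.trans h2.symm).symm hba
      have hvw : ∀ y ∈ X, (G.Adj v y ↔ G.Adj w y) := by
        intro y hy
        have hyI : (⟨y, Or.inl hy⟩ : ↥Y) ∉ I := by
          intro h
          have : (⟨y, hy⟩ : ↥X) ∈ J := h
          rw [hJ] at this
          exact this
        exact hI ⟨y, Or.inl hy⟩ hyI vY hvwI.1 wY hvwI.2
      have h1 : G.Adj v x₁ := (hvw x₁ hx₁X).mpr hx₁
      have h2 : ¬ G.Adj v x₂ := fun h => hx₂ ((hvw x₂ hx₂X).mp h)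
      exact h2 ((huv x₂ hx₂X x₁ hx₁X).mpr h1)
    · -- J = univ : X ⊆ I
      have hXI : ∀ x (hx : x ∈ X), (⟨x, Or.inl hx⟩ : ↥Y) ∈ I := by
        intro x hx
        have : (⟨x, hx⟩ : ↥X) ∈ J := by rw [hJ]; trivial
        exact this
      by_cases hwI : wY ∈ I
      · by_cases hvI : vY ∈ I
        · exfalso
          apply hIuniv
          ext z
          simp only [Set.mem_univ, iff_true]
          rcases z.2 with h | h | h
          · have := hXI (z : V) h
            convert this using 2
          · have : z = vY := Subtype.ext h
            exact this ▸ hvI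
          · have : z = wY := Subtype.ext h
            exact this ▸ hwI
        · -- vY ∉ I, wY ∈ I : key holds
          intro x hx
          have h := hI vY hvI ⟨x, Or.inl hx⟩ (hXI x hx) wY hwI
          -- h : G.Adj x v ↔ G.Adj w v
          rw [G.adj_comm v w, G.adj_comm v x]
          exact h.symm
      · -- wY ∉ I : w uniform on X, contradiction
        exfalso
        have h := hI wY hwI ⟨x₁, Or.inl hx₁X⟩ (hXI x₁ hx₁X) ⟨x₂, Or.inl hx₂X⟩ (hXI x₂ hx₂X)
        -- h : G.Adj x₁ w ↔ G.Adj x₂ w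
        exact hx₂ (h.mp hx₁.symm).symm
    · -- J = {x₀s}
      have hx₀I : (⟨(x₀s : V), Or.inl x₀s.2⟩ : ↥Y) ∈ I := by
        have : x₀s ∈ J := by rw [hJ]; rfl
        exact this
      by_cases hvI : vY ∈ I
      · -- contradiction via X \ {x₀} being an interval of G[X]
        exfalso
        have hAdj : ∀ y : ↥X, y ≠ x₀s → (G.Adj v (y : V) ↔ G.Adj (x₀s : V) (y : V)) := by
          intro y hy
          have hyI : (⟨(y : V), Or.inl y.2⟩ : ↥Y) ∉ I := by
            intro h
            have : y ∈ J := h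
            rw [hJ] at this
            exact hy this
          exact hI ⟨(y : V), Or.inl y.2⟩ hyI vY hvI ⟨(x₀s : V), Or.inl x₀s.2⟩ hx₀I
        set J' : Set ↥X := {y | y ≠ x₀s} with hJ'def
        have hJ'int : IsInterval (G.induce X) J' := by
          intro t ht a ha b hb
          have ht' : t = x₀s := by
            by_contra hcon
            exact ht hcon
          show G.Adj (a : V) (t : V) ↔ G.Adj (b : V) (t : V)
          rw [ht', G.adj_comm (a : V) _, G.adj_comm (b : V) _]
          calc G.Adj (x₀s : V) (a : V) ↔ G.Adj v (a : V) := (hAdj a ha).symm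
            _ ↔ G.Adj v (b : V) := huv _ a.2 _ b.2
            _ ↔ G.Adj (x₀s : V) (b : V) := hAdj b hb
        rcases hind J' hJ'int with h | h | ⟨zs, h⟩
        · -- X ⊆ {x₀}
          have hsub : X ⊆ {(x₀s : V)} := by
            intro y hy
            have : (⟨y, hy⟩ : ↥X) = x₀s := by
              by_contra hcon
              have : (⟨y, hy⟩ : ↥X) ∈ J' := hcon
              rw [h] at this
              exact this
            exact congrArg Subtype.val this
          have := Set.ncard_le_ncard hsub (Set.toFinite _)
          rw [Set.ncard_singleton] at this
          omega
        · have : x₀s ∈ J' := by rw [h]; trivial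
          exact this rfl
        · -- X ⊆ {x₀, z}
          have hsub : X ⊆ {(x₀s : V), (zs : V)} := by
            intro y hy
            by_cases hc : (⟨y, hy⟩ : ↥X) = x₀s
            · exact Or.inl (congrArg Subtype.val hc)
            · have : (⟨y, hy⟩ : ↥X) ∈ J' := hc
              rw [h] at this
              exact Or.inr (congrArg Subtype.val this)
          have h1 := Set.ncard_le_ncard hsub (Set.toFinite _)
          have h2 := Set.ncard_insert_le (x₀s : V) ({(zs : V)} : Set V)
          rw [Set.ncard_singleton] at h2
          omega
      · -- vY ∉ I : then wY ∈ I, key holds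
        have hwI : wY ∈ I := by
          have hb : ∃ b ∈ I, b ≠ (⟨(x₀s : V), Or.inl x₀s.2⟩ : ↥Y) := by
            by_contra hcon
            push_neg at hcon
            exact hIsing _ (Set.eq_singleton_iff_unique_mem.mpr ⟨hx₀I, hcon⟩)
          obtain ⟨b, hbI, hbne⟩ := hb
          have hbX : (b : V) ∈ X → False := by
            intro hbX
            have : (⟨(b : V), hbX⟩ : ↥X) ∈ J := by
              show (⟨(b : V), Or.inl hbX⟩ : ↥Y) ∈ I
              convert hbI using 2
            rw [hJ] at this
            have heq := Set.mem_singleton_iff.mp this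
            exact hbne (Subtype.ext (show (b : V) = (x₀s : V) from congrArg Subtype.val heq))
          rcases classify b hbI hbX with h | h
          · exact absurd (h ▸ hbI) hvI
          · exact h ▸ hbI
        intro x hx
        have h := hI vY hvI ⟨(x₀s : V), Or.inl x₀s.2⟩ hx₀I wY hwI
        -- h : G.Adj x₀ v ↔ G.Adj w v
        rw [G.adj_comm v w, G.adj_comm v x]
        calc G.Adj w v ↔ G.Adj (x₀s : V) v := h.symm
          _ ↔ G.Adj v (x₀s : V) := G.adj_comm _ _
          _ ↔ G.Adj v x := huv _ x₀s.2 _ hx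
          _ ↔ G.Adj x v := G.adj_comm _ _
  -- finish: the only vertex outside X ∪ {w} in Y is v
  intro xq hxq a ha b hb
  have hxv : (xq : V) = v := by
    rcases xq.2 with h | h | h
    · exact absurd (Or.inl h : (xq : V) ∈ X ∪ {w}) hxq
    · exact h
    · exact absurd (Or.inr h : (xq : V) ∈ X ∪ {w}) hxq
  have claim : ∀ c : ↥Y, (c : V) ∈ X ∪ {w} → (G.Adj (c : V) v ↔ G.Adj v w) := by
    intro c hc
    rcases hc with h | h
    · rw [G.adj_comm]
      exact (key _ h).symm
    · rw [h, G.adj_comm]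
  show G.Adj (a : V) (xq : V) ↔ G.Adj (b : V) (xq : V)
  rw [hxv]
  exact (claim a ha).trans (claim b hb).symm
end

section
/- Let G = (V,E) be a graph and X ⊆ V with |X| ≥ 4 and G[X] indecomposable. If v and w are distinct elements of Ext(X) and G[X ∪ {v,w}] is decomposable, then {v,w} is an interval of G[X ∪ {v,w}]. -/
open SimpleGraph

variable {V : Type*}

lemma restrict_interval (G : SimpleGraph V) {S T : Set V} (hST : S ⊆ T)
    {I₀ : Set V} (hI : IsInterval (G.induce T) (Subtype.val ⁻¹' I₀)) :
    IsInterval (G.induce S) (Subtype.val ⁻¹' I₀) := by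
  intro x hx a ha b hb
  have := hI ⟨x.1, hST x.2⟩ hx ⟨a.1, hST a.2⟩ ha ⟨b.1, hST b.2⟩ hb
  simpa using this

lemma tri_interval (G : SimpleGraph V) {S T : Set V} (hST : S ⊆ T)
    (hind : Indecomposable (G.induce S)) {I₀ : Set V}
    (hI : IsInterval (G.induce T) (Subtype.val ⁻¹' I₀)) :
    I₀ ∩ S = ∅ ∨ S ⊆ I₀ ∨ ∃ a ∈ S, I₀ ∩ S = {a} := by
  rcases hind _ (restrict_interval G hST hI) with h | h | ⟨a, h⟩
  · left
    ext s
    simp only [Set.mem_inter_iff, Set.mem_empty_iff_false, iff_false, not_and]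
    intro hsI hsS
    have : (⟨s, hsS⟩ : S) ∈ (Subtype.val ⁻¹' I₀ : Set S) := hsI
    rw [h] at this
    exact this
  · right; left
    intro s hs
    have : (⟨s, hs⟩ : S) ∈ (Subtype.val ⁻¹' I₀ : Set S) := by rw [h]; trivial
    exact this
  · right; right
    refine ⟨a.1, a.2, ?_⟩
    ext s
    simp only [Set.mem_inter_iff, Set.mem_singleton_iff]
    constructor
    · rintro ⟨hsI, hsS⟩
      have : (⟨s, hsS⟩ : S) ∈ (Subtype.val ⁻¹' I₀ : Set S) := hsI
      rw [h] at this
      exact congrArg Subtype.val this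
    · rintro rfl
      have : a ∈ (Subtype.val ⁻¹' I₀ : Set S) := by rw [h]; rfl
      exact ⟨this, a.2⟩

theorem interval_of_ext {V : Type*} [Fintype V] (G : SimpleGraph V) (X : Set V)
    (hX : 4 ≤ X.ncard) (hind : Indecomposable (G.induce X))
    (v w : V) (hv : v ∈ ExtSet G X) (hw : w ∈ ExtSet G X) (hvw : v ≠ w)
    (hdec : Decomposable (G.induce (X ∪ {v, w}))) :
    IsInterval (G.induce (X ∪ {v, w})) (Subtype.val ⁻¹' {v, w}) := by
  obtain ⟨hvX, hvind⟩ := hv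
  obtain ⟨hwX, hwind⟩ := hw
  -- extract a nontrivial interval
  unfold Decomposable Indecomposable at hdec
  push_neg at hdec
  obtain ⟨I, hI, hIne, hIuniv, hIsing⟩ := hdec
  set I₀ : Set V := Subtype.val '' I with hI₀def
  have hIrw : (Subtype.val ⁻¹' I₀ : Set (X ∪ {v, w} : Set V)) = I :=
    Set.preimage_image_eq I Subtype.val_injective
  have hI' : IsInterval (G.induce (X ∪ {v, w})) (Subtype.val ⁻¹' I₀) := by
    rw [hIrw]; exact hI
  -- two distinct elements of I₀
  obtain ⟨p, hp⟩ := hIne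
  rcases I.eq_singleton_or_nontrivial hp with h | hnt
  · exact absurd h (hIsing p)
  obtain ⟨p, hp, q, hq, hpq⟩ := hnt
  have hp0 : p.1 ∈ I₀ := ⟨p, hp, rfl⟩
  have hq0 : q.1 ∈ I₀ := ⟨q, hq, rfl⟩
  have hpq0 : p.1 ≠ q.1 := fun h => hpq (Subtype.val_injective h)
  have hsub : I₀ ⊆ X ∪ {v, w} := by rintro s ⟨t, _, rfl⟩; exact t.2
  -- a vertex not in I₀
  obtain ⟨z, hz⟩ := (Set.ne_univ_iff_exists_notMem I).1 hIuniv
  have hz0 : z.1 ∉ I₀ := fun h => hz (hIrw ▸ h)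
  have hzmem : z.1 ∈ X ∪ {v, w} := z.2
  -- subset facts
  have hSv : (X ∪ {v} : Set V) ⊆ X ∪ {v, w} := by
    intro s hs; rcases hs with hs | hs
    · exact Or.inl hs
    · exact Or.inr (Or.inl hs)
  have hSw : (X ∪ {w} : Set V) ⊆ X ∪ {v, w} := by
    intro s hs; rcases hs with hs | hs
    · exact Or.inl hs
    · exact Or.inr (Or.inr hs)
  have hXcard : ¬ ∃ a : V, X ⊆ {a} := by
    rintro ⟨a, ha⟩
    have : X.ncard ≤ ({a} : Set V).ncard :=
      Set.ncard_le_ncard ha (Set.finite_singleton a)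
    rw [Set.ncard_singleton] at this
    omega
  have triv := tri_interval G hSv hvind hI'
  have triw := tri_interval G hSw hwind hI'
  -- key: any element of I₀ outside X∪{v} equals w, outside X∪{w} equals v
  have hmemv : ∀ s ∈ I₀, s ∉ (X ∪ {v} : Set V) → s = w := by
    intro s hs hns
    rcases hsub hs with h | h | h
    · exact absurd (Or.inl h) hns
    · exact absurd (Or.inr h) hns
    · exact h
  have hmemw : ∀ s ∈ I₀, s ∉ (X ∪ {w} : Set V) → s = v := by
    intro s hs hns
    rcases hsub hs with h | h | h
    · exact absurd (Or.inl h) hns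
    · exact h
    · exact absurd (Or.inr h) hns
  -- dispatch cases
  have notemptyv : I₀ ∩ (X ∪ {v}) ≠ ∅ := by
    intro h
    have hpw : p.1 = w := hmemv _ hp0 (fun hm => (Set.eq_empty_iff_forall_notMem.1 h p.1) ⟨hp0, hm⟩)
    have hqw : q.1 = w := hmemv _ hq0 (fun hm => (Set.eq_empty_iff_forall_notMem.1 h q.1) ⟨hq0, hm⟩)
    exact hpq0 (hpw.trans hqw.symm)
  have notemptyw : I₀ ∩ (X ∪ {w}) ≠ ∅ := by
    intro h
    have hpw : p.1 = v := hmemw _ hp0 (fun hm => (Set.eq_empty_iff_forall_notMem.1 h p.1) ⟨hp0, hm⟩)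
    have hqw : q.1 = v := hmemw _ hq0 (fun hm => (Set.eq_empty_iff_forall_notMem.1 h q.1) ⟨hq0, hm⟩)
    exact hpq0 (hpw.trans hqw.symm)
  have hXne : X.Nonempty := by
    rw [Set.nonempty_iff_ne_empty]
    rintro rfl
    simp [Set.ncard_empty] at hX
  -- main case analysis
  have hfinal : I₀ = {v, w} := by
    rcases triv with hev | hfv | ⟨a, haS, hav⟩
    · exact absurd hev notemptyv
    · -- X ∪ {v} ⊆ I₀
      have hzw : z.1 = w := by
        rcases hzmem with h | h | h
        · exact absurd (hfv (Or.inl h)) hz0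
        · exact absurd (hfv (Or.inr h)) hz0
        · exact h
      have hwI : w ∉ I₀ := hzw ▸ hz0
      rcases triw with hew | hfw | ⟨b, hbS, hbw⟩
      · obtain ⟨x₀, hx₀⟩ := hXne
        exact absurd hew (Set.nonempty_iff_ne_empty.1 ⟨x₀, hfv (Or.inl hx₀), Or.inl hx₀⟩)
      · exact absurd (hfw (Or.inr rfl)) hwI
      · refine absurd ⟨b, fun x hx => ?_⟩ hXcard
        have : x ∈ I₀ ∩ (X ∪ {w}) := ⟨hfv (Or.inl hx), Or.inl hx⟩
        rw [hbw] at this; exact this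
    · -- I₀ ∩ (X ∪ {v}) = {a}
      rcases triw with hew | hfw | ⟨b, hbS, hbw⟩
      · -- I₀ ∩ (X ∪ {w}) = ∅ : everything in I₀ equals v, contradiction
        have hpv : p.1 = v := hmemw _ hp0
          (fun hm => (Set.eq_empty_iff_forall_notMem.1 hew p.1) ⟨hp0, hm⟩)
        have hqv : q.1 = v := hmemw _ hq0
          (fun hm => (Set.eq_empty_iff_forall_notMem.1 hew q.1) ⟨hq0, hm⟩)
        exact absurd (hpv.trans hqv.symm) hpq0
      · -- X ∪ {w} ⊆ I₀ : then X ⊆ I₀ ∩ (X ∪ {v}) = {a}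
        refine absurd ⟨a, fun x hx => ?_⟩ hXcard
        have : x ∈ I₀ ∩ (X ∪ {v}) := ⟨hfw (Or.inl hx), Or.inl hx⟩
        rw [hav] at this; exact this
      · -- both singletons
        have haI : a ∈ I₀ := by
          have : a ∈ I₀ ∩ (X ∪ {v}) := hav ▸ rfl
          exact this.1
        have hbI : b ∈ I₀ := by
          have : b ∈ I₀ ∩ (X ∪ {w}) := hbw ▸ rfl
          exact this.1
        have hIaw : ∀ s ∈ I₀, s = a ∨ s = w := by
          intro s hs
          by_cases hm : s ∈ (X ∪ {v} : Set V)
          · left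
            have : s ∈ I₀ ∩ (X ∪ {v}) := ⟨hs, hm⟩
            rw [hav] at this; exact this
          · exact Or.inr (hmemv _ hs hm)
        have hIbv : ∀ s ∈ I₀, s = b ∨ s = v := by
          intro s hs
          by_cases hm : s ∈ (X ∪ {w} : Set V)
          · left
            have : s ∈ I₀ ∩ (X ∪ {w}) := ⟨hs, hm⟩
            rw [hbw] at this; exact this
          · exact Or.inr (hmemw _ hs hm)
        -- from two distinct elements: w ∈ I₀ and v ∈ I₀
        have hwI : w ∈ I₀ := by
          rcases hIaw p.1 hp0 with h1 | h1
          · rcases hIaw q.1 hq0 with h2 | h2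
            · exact absurd (h1.trans h2.symm) hpq0
            · exact h2 ▸ hq0
          · exact h1 ▸ hp0
        have hvI : v ∈ I₀ := by
          rcases hIbv p.1 hp0 with h1 | h1
          · rcases hIbv q.1 hq0 with h2 | h2
            · exact absurd (h1.trans h2.symm) hpq0
            · exact h2 ▸ hq0
          · exact h1 ▸ hp0
        have hav' : a = v := by
          rcases hIbv a haI with h | h
          · rcases hIaw b hbI with h' | h'
            · rw [h, h']
              rcases hIaw v hvI with h'' | h''
              · exact h''.symm
              · exact absurd h'' hvw
            · rcases hIaw v hvI with h'' | h''
              · exact h''.symm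
              · exact absurd h'' hvw
          · exact h
        ext s
        simp only [Set.mem_insert_iff, Set.mem_singleton_iff]
        constructor
        · intro hs
          rcases hIaw s hs with h | h
          · exact Or.inl (h.trans hav')
          · exact Or.inr h
        · rintro (rfl | rfl)
          · exact hvI
          · exact hwI
  have hgoal := hI'
  rw [hfinal] at hgoal
  exact hgoal
end

section
/- Let G = (V,E) be an indecomposable graph and X ⊆ V with |X| ≥ 4, |V \ X| ≥ 2, and G[X] indecomposable. Then there exist distinct x, y ∈ V \ X such that G[X ∪ {x,y}] is indecomposable. -/
open SimpleGraph

variable {V : Type*}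

/-- `I` is an interval of the induced subgraph on `S`, stated at the ambient level. -/
def IIn (G : SimpleGraph V) (S I : Set V) : Prop :=
  ∀ z ∈ S, z ∉ I → ∀ a ∈ I, ∀ b ∈ I, (G.Adj a z ↔ G.Adj b z)

lemma decomp_extract (G : SimpleGraph V) (S : Set V)
    (h : ¬ Indecomposable (G.induce S)) :
    ∃ I, I ⊆ S ∧ IIn G S I ∧ (∃ a ∈ I, ∃ b ∈ I, a ≠ b) ∧ I ≠ S := by
  unfold Indecomposable at h
  push_neg at h
  obtain ⟨J, hJ, hne, hnuniv, hnsing⟩ := h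
  refine ⟨Subtype.val '' J, ?_, ?_, ?_, ?_⟩
  · rintro x ⟨j, _, rfl⟩; exact j.2
  · rintro z hzS hz a ⟨ja, hja, rfl⟩ b ⟨jb, hjb, rfl⟩
    have hzJ : (⟨z, hzS⟩ : S) ∉ J := fun hmem => hz ⟨⟨z, hzS⟩, hmem, rfl⟩
    have := hJ ⟨z, hzS⟩ hzJ ja hja jb hjb
    simpa [SimpleGraph.comap_adj, SimpleGraph.induce] using this
  · obtain ⟨a, ha⟩ := hne
    have hns : ¬ J ⊆ {a} := by
      intro hsub
      exact hnsing a (subset_antisymm hsub (by simp [ha]))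
    obtain ⟨b, hb, hba⟩ := Set.not_subset.mp hns
    refine ⟨a.val, ⟨a, ha, rfl⟩, b.val, ⟨b, hb, rfl⟩, ?_⟩
    simp only [Set.mem_singleton_iff] at hba
    exact fun h => hba (Subtype.ext h.symm)
  · intro hIS
    apply hnuniv
    ext x
    simp only [Set.mem_univ, iff_true]
    have hx : x.val ∈ Subtype.val '' J := by rw [hIS]; exact x.2
    obtain ⟨j, hj, hjx⟩ := hx
    rwa [show j = x from Subtype.ext hjx] at hj

lemma indecomp_use (G : SimpleGraph V) {S I : Set V}
    (hind : Indecomposable (G.induce S)) (hIS : I ⊆ S) (hI : IIn G S I) :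
    I = ∅ ∨ I = S ∨ ∃ x, I = {x} := by
  have hint : IsInterval (G.induce S) (Subtype.val ⁻¹' I) := by
    rintro x hx a ha b hb
    have := hI x.val x.2 hx a.val ha b.val hb
    simpa [SimpleGraph.comap_adj, SimpleGraph.induce] using this
  rcases hind _ hint with h | h | ⟨x, h⟩
  · left
    ext y
    simp only [Set.mem_empty_iff_false, iff_false]
    intro hy
    have : (⟨y, hIS hy⟩ : S) ∈ Subtype.val ⁻¹' I := hy
    rw [h] at this; exact this
  · right; left
    refine subset_antisymm hIS fun y hy => ?_
    have : (⟨y, hy⟩ : S) ∈ Subtype.val ⁻¹' I := by rw [h]; trivial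
    exact this
  · right; right
    refine ⟨x.val, subset_antisymm ?_ ?_⟩
    · intro y hy
      have : (⟨y, hIS hy⟩ : S) ∈ Subtype.val ⁻¹' I := hy
      rw [h] at this
      simp only [Set.mem_singleton_iff] at this ⊢
      exact congrArg Subtype.val this
    · intro y hy
      simp only [Set.mem_singleton_iff] at hy
      subst hy
      have : x ∈ Subtype.val ⁻¹' I := by rw [h]; rfl
      exact this

lemma IIn_mono (G : SimpleGraph V) {S T I : Set V} (hTS : T ⊆ S) (hI : IIn G S I) :
    IIn G T (I ∩ T) := by
  rintro z hzT hz a ⟨ha, _⟩ b ⟨hb, _⟩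
  exact hI z (hTS hzT) (fun hzI => hz ⟨hzI, hzT⟩) a ha b hb

lemma IIn_pair (G : SimpleGraph V) {S : Set V} {u v : V}
    (h : ∀ z ∈ S, z ≠ u → z ≠ v → (G.Adj u z ↔ G.Adj v z)) :
    IIn G S {u, v} := by
  rintro z hz hz' a (rfl | ha) b (rfl | hb)
  · rfl
  · rw [Set.mem_singleton_iff] at hb; subst hb
    exact h z hz (fun h => hz' (by simp [h])) (fun h => hz' (by simp [h]))
  · rw [Set.mem_singleton_iff] at ha; subst ha
    exact (h z hz (fun h => hz' (by simp [h])) (fun h => hz' (by simp [h]))).symm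
  · rw [Set.mem_singleton_iff] at ha hb; subst ha; subst hb; rfl

/-- `v` is adjacent to all of `X` or to none of `X`. -/
def Unif (G : SimpleGraph V) (X : Set V) (v : V) : Prop :=
  ∀ a ∈ X, ∀ b ∈ X, (G.Adj a v ↔ G.Adj b v)

/-- `{u,v}` is an interval of `G[X ∪ {v}]` (for `u ∈ X`, `v ∉ X`). -/
def XU (G : SimpleGraph V) (X : Set V) (u v : V) : Prop :=
  ∀ z ∈ X, z ≠ u → (G.Adj u z ↔ G.Adj v z)

section Comb
variable {G : SimpleGraph V} {X : Set V}



/-- Classification of a vertex outside `X`. -/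
lemma classify_s15 (hind : Indecomposable (G.induce X)) {v : V} (hv : v ∉ X)
    (hdec : ¬ Indecomposable (G.induce (X ∪ {v}))) :
    Unif G X v ∨ ∃ u ∈ X, XU G X u v := by
  obtain ⟨I, hIS, hIIn, ⟨a0, ha0, b0, hb0, hab⟩, hne⟩ := decomp_extract G (X ∪ {v}) hdec
  have hXsub : X ⊆ X ∪ {v} := Set.subset_union_left
  have hJ := IIn_mono G hXsub hIIn
  rcases indecomp_use G hind Set.inter_subset_right hJ with h | h | ⟨u, h⟩
  · -- I ∩ X = ∅, so I ⊆ {v}: contradicts nontriviality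
    exfalso
    have hsub : I ⊆ {v} := by
      intro t ht
      rcases hIS ht with htX | htv
      · have hm : t ∈ I ∩ X := ⟨ht, htX⟩
        rw [h] at hm; exact hm.elim
      · exact htv
    have h1 := hsub ha0; have h2 := hsub hb0
    simp only [Set.mem_singleton_iff] at h1 h2
    exact hab (h1.trans h2.symm)
  · -- I ∩ X = X, so I = X (since I ≠ X ∪ {v})
    left
    have hXI : X ⊆ I := fun x hx => by
      have : x ∈ I ∩ X := by rw [h]; exact hx
      exact this.1
    have hvI : v ∉ I := by
      intro hvI
      exact hne (subset_antisymm hIS (Set.union_subset hXI (by simpa using hvI)))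
    intro a ha b hb
    exact hIIn v (by simp) hvI a (hXI ha) b (hXI hb)
  · -- I ∩ X = {u}
    right
    have hu : u ∈ I ∧ u ∈ X := by
      have : u ∈ I ∩ X := by rw [h]; rfl
      exact ⟨this.1, this.2⟩
    have hsub : I ⊆ {u, v} := by
      intro t ht
      rcases hIS ht with htX | htv
      · have : t ∈ I ∩ X := ⟨ht, htX⟩
        rw [h] at this; simp only [Set.mem_singleton_iff] at this; simp [this]
      · simp [htv]
    have hvI : v ∈ I := by
      by_contra hvI
      have ha0' := hsub ha0; have hb0' := hsub hb0
      have : a0 = u ∧ b0 = u := by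
        constructor
        · rcases ha0' with h' | h'
          · exact h'
          · simp only [Set.mem_singleton_iff] at h'; exact absurd (h' ▸ ha0) hvI
        · rcases hb0' with h' | h'
          · exact h'
          · simp only [Set.mem_singleton_iff] at h'; exact absurd (h' ▸ hb0) hvI
      exact hab (this.1.trans this.2.symm)
    refine ⟨u, hu.2, fun z hz hzu => ?_⟩
    have hzI : z ∉ I := by
      intro hzI
      have : z ∈ I ∩ X := ⟨hzI, hz⟩
      rw [h] at this; exact hzu this
    exact hIIn z (Or.inl hz) hzI u hu.1 v hvI


variable (h3 : ∀ u u' : V, ∃ a ∈ X, a ≠ u ∧ a ≠ u')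
variable (hind : Indecomposable (G.induce X))

include h3

lemma E1 {v : V} (hext : Indecomposable (G.induce (X ∪ {v}))) (hv : v ∉ X)
    (hun : Unif G X v) : False := by
  have hI : IIn G (X ∪ {v}) X := by
    rintro z hz hzX a ha b hb
    rcases hz with hz | hz
    · exact absurd hz hzX
    · simp only [Set.mem_singleton_iff] at hz; subst hz
      exact hun a ha b hb
  rcases indecomp_use G hext Set.subset_union_left hI with h | h | ⟨x, h⟩
  · obtain ⟨a, ha, -, -⟩ := h3 v v
    rw [h] at ha; exact ha.elim
  · exact hv (by rw [h]; simp)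
  · obtain ⟨a, ha, hax, -⟩ := h3 x x
    rw [h] at ha; exact hax ha

lemma E2 {u v : V} (hext : Indecomposable (G.induce (X ∪ {v}))) (hv : v ∉ X)
    (hu : u ∈ X) (hxu : XU G X u v) : False := by
  have hI : IIn G (X ∪ {v}) {u, v} := by
    apply IIn_pair
    intro z hz hzu hzv
    rcases hz with hz | hz
    · exact hxu z hz hzu
    · exact absurd hz hzv
  have hsub : ({u, v} : Set V) ⊆ X ∪ {v} := by
    rintro t (rfl | ht)
    · exact Or.inl hu
    · exact Or.inr ht
  rcases indecomp_use G hext hsub hI with h | h | ⟨x, h⟩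
  · have : u ∈ ({u, v} : Set V) := by simp
    rw [h] at this; exact this.elim
  · obtain ⟨a, ha, hau, hav⟩ := h3 u v
    have : a ∈ ({u, v} : Set V) := by rw [h]; exact Or.inl ha
    rcases this with h' | h'
    · exact hau h'
    · exact hav h'
  · have h1 : u ∈ ({u, v} : Set V) := by simp
    have h2 : v ∈ ({u, v} : Set V) := by simp
    rw [h] at h1 h2
    simp only [Set.mem_singleton_iff] at h1 h2
    exact hv ((h1.trans h2.symm) ▸ hu)

include hind

lemma E3 {u v : V} (hun : Unif G X v) (hv : v ∉ X) (hu : u ∈ X)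
    (hxu : XU G X u v) : False := by
  have hI : IIn G X (X \ {u}) := by
    rintro z hz hzd a ⟨ha, ha'⟩ b ⟨hb, hb'⟩
    simp only [Set.mem_singleton_iff] at ha' hb'
    have hzu : z = u := by
      by_contra h
      exact hzd ⟨hz, h⟩
    subst hzu
    have c1 : G.Adj a z ↔ G.Adj v a := by rw [G.adj_comm]; exact hxu a ha ha'
    have c2 : G.Adj b z ↔ G.Adj v b := by rw [G.adj_comm]; exact hxu b hb hb'
    rw [c1, c2, G.adj_comm v a, G.adj_comm v b]
    exact hun a ha b hb
  rcases indecomp_use G hind Set.diff_subset hI with h | h | ⟨x, h⟩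
  · obtain ⟨a, ha, hau, -⟩ := h3 u u
    have : a ∈ X \ {u} := ⟨ha, hau⟩
    rw [h] at this; exact this.elim
  · have : u ∈ X \ {u} := by rw [h]; exact hu
    exact this.2 rfl
  · obtain ⟨a, ha, hau, hax⟩ := h3 u x
    have : a ∈ X \ {u} := ⟨ha, hau⟩
    rw [h] at this
    exact hax this

lemma E4 {u u' v : V} (hu : u ∈ X) (hu' : u' ∈ X) (hne : u ≠ u') (hv : v ∉ X)
    (h1 : XU G X u v) (h2 : XU G X u' v) : False := by
  have hI : IIn G X {u, u'} := by
    apply IIn_pair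
    intro z hz hzu hzu'
    rw [h1 z hz hzu, h2 z hz hzu']
  have hsub : ({u, u'} : Set V) ⊆ X := by
    rintro t (rfl | ht)
    · exact hu
    · simp only [Set.mem_singleton_iff] at ht; exact ht ▸ hu'
  rcases indecomp_use G hind hsub hI with h | h | ⟨x, h⟩
  · have : u ∈ ({u, u'} : Set V) := by simp
    rw [h] at this; exact this.elim
  · obtain ⟨a, ha, hau, hau'⟩ := h3 u u'
    have : a ∈ ({u, u'} : Set V) := by rw [h]; exact ha
    rcases this with h' | h'
    · exact hau h'
    · exact hau' h'
  · have ha : u ∈ ({u, u'} : Set V) := by simp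
    have hb : u' ∈ ({u, u'} : Set V) := by simp
    rw [h] at ha hb
    simp only [Set.mem_singleton_iff] at ha hb
    exact hne (ha.trans hb.symm)


omit h3 in
lemma pair {v w : V} (hvw : v ≠ w)
    (hdec : ¬ Indecomposable (G.induce (X ∪ {v, w}))) :
    (∀ x ∈ X, (G.Adj v x ↔ G.Adj w x))
  ∨ (Unif G X v ∧ Unif G X w)
  ∨ (∀ a ∈ X ∪ {v}, ∀ b ∈ X ∪ {v}, (G.Adj a w ↔ G.Adj b w))
  ∨ (∀ a ∈ X ∪ {w}, ∀ b ∈ X ∪ {w}, (G.Adj a v ↔ G.Adj b v))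
  ∨ (∃ u ∈ X, XU G X u v ∧ (G.Adj u w ↔ G.Adj v w))
  ∨ (∃ u ∈ X, XU G X u w ∧ (G.Adj u v ↔ G.Adj w v))
  ∨ (∃ u ∈ X, XU G X u v ∧ XU G X u w) := by
  obtain ⟨I, hIS, hIIn, ⟨a0, ha0, b0, hb0, hab⟩, hne⟩ :=
    decomp_extract G (X ∪ {v, w}) hdec
  have hvS : v ∈ X ∪ {v, w} := by simp
  have hwS : w ∈ X ∪ {v, w} := by simp
  have hJ := IIn_mono G (Set.subset_union_left (s := X) (t := {v, w})) hIIn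
  rcases indecomp_use G hind Set.inter_subset_right hJ with h | h | ⟨u, h⟩
  · -- I ∩ X = ∅ : I = {v, w}
    have hsub : I ⊆ {v, w} := by
      intro t ht
      rcases hIS ht with htX | htv
      · have hm : t ∈ I ∩ X := ⟨ht, htX⟩
        rw [h] at hm; exact hm.elim
      · exact htv
    have hvwI : v ∈ I ∧ w ∈ I := by
      have ha := hsub ha0; have hb := hsub hb0
      simp only [Set.mem_insert_iff, Set.mem_singleton_iff] at ha hb
      rcases ha with rfl | rfl <;> rcases hb with rfl | rfl
      · exact absurd rfl hab
      · exact ⟨ha0, hb0⟩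
      · exact ⟨hb0, ha0⟩
      · exact absurd rfl hab
    left
    intro x hx
    have hxI : x ∉ I := by
      intro hxI
      have hm : x ∈ I ∩ X := ⟨hxI, hx⟩
      rw [h] at hm; exact hm.elim
    exact hIIn x (Or.inl hx) hxI v hvwI.1 w hvwI.2
  · -- I ∩ X = X
    have hXI : X ⊆ I := fun x hx => by
      have : x ∈ I ∩ X := by rw [h]; exact hx
      exact this.1
    by_cases hvI : v ∈ I <;> by_cases hwI : w ∈ I
    · exfalso
      apply hne
      apply subset_antisymm hIS
      apply Set.union_subset hXI
      rintro t (rfl | ht)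
      · exact hvI
      · simp only [Set.mem_singleton_iff] at ht; exact ht ▸ hwI
    · right; right; left
      rintro a ha b hb
      have haI : a ∈ I := by
        rcases ha with ha | ha
        · exact hXI ha
        · simp only [Set.mem_singleton_iff] at ha; exact ha ▸ hvI
      have hbI : b ∈ I := by
        rcases hb with hb | hb
        · exact hXI hb
        · simp only [Set.mem_singleton_iff] at hb; exact hb ▸ hvI
      exact hIIn w hwS hwI a haI b hbI
    · right; right; right; left
      rintro a ha b hb
      have haI : a ∈ I := by
        rcases ha with ha | ha
        · exact hXI ha
        · simp only [Set.mem_singleton_iff] at ha; exact ha ▸ hwI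
      have hbI : b ∈ I := by
        rcases hb with hb | hb
        · exact hXI hb
        · simp only [Set.mem_singleton_iff] at hb; exact hb ▸ hwI
      exact hIIn v hvS hvI a haI b hbI
    · right; left
      constructor
      · intro a ha b hb
        exact hIIn v hvS hvI a (hXI ha) b (hXI hb)
      · intro a ha b hb
        exact hIIn w hwS hwI a (hXI ha) b (hXI hb)
  · -- I ∩ X = {u}
    have huI : u ∈ I ∧ u ∈ X := by
      have : u ∈ I ∩ X := by rw [h]; rfl
      exact ⟨this.1, this.2⟩
    have hXout : ∀ z ∈ X, z ≠ u → z ∉ I := by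
      intro z hz hzu hzI
      have : z ∈ I ∩ X := ⟨hzI, hz⟩
      rw [h] at this
      exact hzu this
    by_cases hvI : v ∈ I <;> by_cases hwI : w ∈ I
    · right; right; right; right; right; right
      refine ⟨u, huI.2, fun z hz hzu => ?_, fun z hz hzu => ?_⟩
      · exact hIIn z (Or.inl hz) (hXout z hz hzu) u huI.1 v hvI
      · exact hIIn z (Or.inl hz) (hXout z hz hzu) u huI.1 w hwI
    · right; right; right; right; left
      refine ⟨u, huI.2, fun z hz hzu => ?_, ?_⟩
      · exact hIIn z (Or.inl hz) (hXout z hz hzu) u huI.1 v hvI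
      · exact hIIn w hwS hwI u huI.1 v hvI
    · right; right; right; right; right; left
      refine ⟨u, huI.2, fun z hz hzu => ?_, ?_⟩
      · exact hIIn z (Or.inl hz) (hXout z hz hzu) u huI.1 w hwI
      · exact hIIn v hvS hvI u huI.1 w hwI
    · exfalso
      have hsub : I ⊆ {u} := by
        intro t ht
        rcases hIS ht with htX | htv
        · have : t ∈ I ∩ X := ⟨ht, htX⟩
          rw [h] at this; exact this
        · rcases htv with rfl | htv
          · exact absurd ht hvI
          · simp only [Set.mem_singleton_iff] at htv; exact absurd (htv ▸ ht) hwI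
      have h1 := hsub ha0; have h2 := hsub hb0
      simp only [Set.mem_singleton_iff] at h1 h2
      exact hab (h1.trans h2.symm)


variable (hG : Indecomposable G)
    (hcon : ∀ x y : V, x ∉ X → y ∉ X → x ≠ y →
      ¬ Indecomposable (G.induce (X ∪ {x, y})))

include hG hcon

lemma noXU : ∀ u ∈ X, ∀ y, y ∉ X → ¬ XU G X u y := by
  intro u hu y hy hxy
  set K : Set V := {t | t = u ∨ (t ∉ X ∧ XU G X u t)} with hK
  have key : ∀ t ∈ K, ∀ z, z ∉ K → (G.Adj t z ↔ G.Adj u z) := by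
    rintro t ht z hzK
    rcases ht with rfl | ⟨htX, hxt⟩
    · exact Iff.rfl
    by_cases hzX : z ∈ X
    · have hzu : z ≠ u := fun h => hzK (Or.inl h)
      exact (hxt z hzX hzu).symm
    · have hnXU : ¬ XU G X u z := fun h => hzK (Or.inr ⟨hzX, h⟩)
      have htz : t ≠ z := by
        rintro rfl
        exact hzK (Or.inr ⟨htX, hxt⟩)
      rcases pair hind htz (hcon t z htX hzX htz) with
        C1 | ⟨C2a, -⟩ | C3 | C3' | ⟨u', hu', hxu', hadj⟩ | ⟨u', hu', hxu', hadj2⟩ |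
          ⟨u', hu', hx1, hx2⟩
      · exact absurd (fun x hx hxu => (hxt x hx hxu).trans (C1 x hx)) hnXU
      · exact absurd (E3 h3 hind C2a htX hu hxt) id
      · exact C3 t (Or.inr rfl) u (Or.inl hu)
      · exfalso
        refine E3 h3 hind (fun a ha b hb => ?_) htX hu hxt
        exact C3' a (Or.inl ha) b (Or.inl hb)
      · rcases eq_or_ne u' u with rfl | hne
        · exact hadj.symm
        · exact absurd (E4 h3 hind hu hu' hne.symm htX hxt hxu') id
      · rcases eq_or_ne u' u with rfl | hne
        · exact absurd hxu' hnXU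
        · have h2 : G.Adj u u' ↔ G.Adj t u' := hxt u' hu' hne
          have h3' : G.Adj u' u ↔ G.Adj z u := hxu' u hu hne.symm
          have s1 : G.Adj t z ↔ G.Adj t u' := by
            rw [G.adj_comm t z, G.adj_comm t u']; exact hadj2.symm
          have s2 : G.Adj u u' ↔ G.Adj u z := by
            rw [G.adj_comm u u', G.adj_comm u z]; exact h3'
          exact s1.trans (h2.symm.trans s2)
      · rcases eq_or_ne u' u with rfl | hne
        · exact absurd hx2 hnXU
        · exact absurd (E4 h3 hind hu hu' hne.symm htX hxt hx1) id
  have hKint : IsInterval G K := by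
    intro z hz a ha b hb
    rw [key a ha z hz, key b hb z hz]
  rcases hG K hKint with h | h | ⟨x, h⟩
  · have : u ∈ K := Or.inl rfl
    rw [h] at this; exact this
  · obtain ⟨a, ha, hau, -⟩ := h3 u u
    have : a ∈ K := by rw [h]; trivial
    rcases this with h' | ⟨h', -⟩
    · exact hau h'
    · exact h' ha
  · have h1 : u ∈ K := Or.inl rfl
    have h2 : y ∈ K := Or.inr ⟨hy, hxy⟩
    rw [h] at h1 h2
    simp only [Set.mem_singleton_iff] at h1 h2
    exact hy ((h2.trans h1.symm) ▸ hu)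


lemma noUnif : ∀ v, v ∉ X → ¬ Unif G X v := by
  intro z0 hz0 hun0
  have hnx := noXU h3 hind hG hcon
  have hext : ∀ t, t ∉ X → ¬ Unif G X t →
      Indecomposable (G.induce (X ∪ {t})) := by
    intro t ht hnu
    by_contra hd
    rcases classify_s15 hind ht hd with h | ⟨u, hu, h⟩
    · exact hnu h
    · exact hnx u hu t ht h
  set M : Set V := X ∪ {t | t ∉ X ∧ Indecomposable (G.induce (X ∪ {t}))} with hM
  have hzM : ∀ z, z ∉ M → Unif G X z := by
    intro z hz
    have hzX : z ∉ X := fun h => hz (Or.inl h)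
    by_contra hnu
    exact hz (Or.inr ⟨hzX, hext z hzX hnu⟩)
  obtain ⟨x0, hx0, -, -⟩ := h3 z0 z0
  have key : ∀ t ∈ M, ∀ z, z ∉ M → (G.Adj t z ↔ G.Adj x0 z) := by
    rintro t ht z hz
    have hunz := hzM z hz
    have hzX : z ∉ X := fun h => hz (Or.inl h)
    rcases ht with htX | ⟨htX, htind⟩
    · exact hunz t htX x0 hx0
    · have htz : t ≠ z := by
        rintro rfl
        exact hz (Or.inr ⟨htX, htind⟩)
      rcases pair hind htz (hcon t z htX hzX htz) with
        C1 | ⟨C2a, -⟩ | C3 | C3' | ⟨u, hu, hxu, -⟩ | ⟨u, hu, hxu, -⟩ | ⟨u, hu, hxu, -⟩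
      · exfalso
        refine E1 h3 htind htX (fun a ha b hb => ?_)
        have s1 : G.Adj a t ↔ G.Adj a z := by
          rw [G.adj_comm a t, G.adj_comm a z]; exact C1 a ha
        have s2 : G.Adj b t ↔ G.Adj b z := by
          rw [G.adj_comm b t, G.adj_comm b z]; exact C1 b hb
        rw [s1, s2]
        exact hunz a ha b hb
      · exact absurd (E1 h3 htind htX C2a) id
      · exact C3 t (Or.inr rfl) x0 (Or.inl hx0)
      · exact absurd (E1 h3 htind htX
          (fun a ha b hb => C3' a (Or.inl ha) b (Or.inl hb))) id
      · exact absurd (hnx u hu t htX hxu) id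
      · exact absurd (hnx u hu z hzX hxu) id
      · exact absurd (hnx u hu t htX hxu) id
  have hMint : IsInterval G M := by
    intro z hz a ha b hb
    rw [key a ha z hz, key b hb z hz]
  rcases hG M hMint with h | h | ⟨x, h⟩
  · have : x0 ∈ M := Or.inl hx0
    rw [h] at this; exact this
  · have : z0 ∈ M := by rw [h]; trivial
    rcases this with h' | ⟨-, h'⟩
    · exact hz0 h'
    · exact E1 h3 h' hz0 hun0
  · obtain ⟨a, ha, hax0, -⟩ := h3 x0 x0
    have h1 : x0 ∈ M := Or.inl hx0
    have h2 : a ∈ M := Or.inl ha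
    rw [h] at h1 h2
    simp only [Set.mem_singleton_iff] at h1 h2
    exact hax0 (h2.trans h1.symm)

lemma noPair {v w : V} (hv : v ∉ X) (hw : w ∉ X) (hvw : v ≠ w) : False := by
  have hnx := noXU h3 hind hG hcon
  have hnu := noUnif h3 hind hG hcon
  have hNint : IsInterval G Xᶜ := by
    intro z hz a ha b hb
    have hzX : z ∈ X := not_not.mp hz
    have ha' : a ∉ X := ha
    have hb' : b ∉ X := hb
    by_cases hab : a = b
    · subst hab; exact Iff.rfl
    rcases pair hind hab (hcon a b ha' hb' hab) with
      C1 | ⟨C2a, -⟩ | C3 | C3' | ⟨u, hu, hxu, -⟩ | ⟨u, hu, hxu, -⟩ | ⟨u, hu, hxu, -⟩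
    · exact C1 z hzX
    · exact absurd C2a (hnu a ha')
    · exact absurd (fun p hp q hq => C3 p (Or.inl hp) q (Or.inl hq)) (hnu b hb')
    · exact absurd (fun p hp q hq => C3' p (Or.inl hp) q (Or.inl hq)) (hnu a ha')
    · exact absurd hxu (hnx u hu a ha')
    · exact absurd hxu (hnx u hu b hb')
    · exact absurd hxu (hnx u hu a ha')
  rcases hG Xᶜ hNint with h | h | ⟨x, h⟩
  · have : v ∈ Xᶜ := hv
    rw [h] at this; exact this
  · obtain ⟨x0, hx0, -, -⟩ := h3 v v
    have : x0 ∈ Xᶜ := by rw [h]; trivial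
    exact this hx0
  · have h1 : v ∈ Xᶜ := hv
    have h2 : w ∈ Xᶜ := hw
    rw [h] at h1 h2
    simp only [Set.mem_singleton_iff] at h1 h2
    exact hvw (h1.trans h2.symm)

end Comb


theorem extend_by_two {V : Type*} [Fintype V] (G : SimpleGraph V)
    (hG : Indecomposable G) (X : Set V) (hX : 4 ≤ X.ncard)
    (hout : 2 ≤ (Set.univ \ X).ncard) (hind : Indecomposable (G.induce X)) :
    ∃ x y : V, x ∉ X ∧ y ∉ X ∧ x ≠ y ∧
      Indecomposable (G.induce (X ∪ {x, y})) := by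
  by_contra hcon0
  push_neg at hcon0
  have h3 : ∀ u u' : V, ∃ a ∈ X, a ≠ u ∧ a ≠ u' := by
    intro u u'
    by_contra h
    push_neg at h
    have hsub : X ⊆ {u, u'} := by
      intro a ha
      by_cases h1 : a = u
      · simp [h1]
      · simp [h a ha h1]
    have hle := Set.ncard_le_ncard hsub (Set.toFinite _)
    have h2 : ({u, u'} : Set V).ncard ≤ 2 := by
      apply le_trans (Set.ncard_insert_le _ _); simp
    omega
  obtain ⟨v, hv, w, hw, hvw⟩ :
      ∃ a ∈ Set.univ \ X, ∃ b ∈ Set.univ \ X, a ≠ b := by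
    obtain ⟨a, b, ha, hb, hab⟩ :=
      (Set.one_lt_ncard_iff (s := Set.univ \ X) (Set.toFinite _)).mp (by omega)
    exact ⟨a, ha, b, hb, hab⟩
  have hcon : ∀ x y : V, x ∉ X → y ∉ X → x ≠ y →
      ¬ Indecomposable (G.induce (X ∪ {x, y})) := fun x y hx hy hxy =>
    hcon0 x y hx hy hxy
  exact (noPair h3 hind hG hcon hv.2 hw.2 hvw).elim
end
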